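/- arXiv:1504.03368 — 6 statements merged into one kernel-verified Lean document; each statement's English description precedes it below -/
import Mathlib

section
/- The polynomial p(t) = t⁴ + 3t² + 1 is irreducible in the polynomial ring ℚ(ζ₇)[t]. -/
open Polynomial IsCyclotomicExtension

noncomputable section

local notation "K7" => CyclotomicField 7 ℚ

lemma hirr7 : Irreducible (cyclotomic (↑(7:ℕ+)) ℚ) := cyclotomic.irreducible_rat (by norm_num)

lemma keyK (c : ℚ) (hc : ∀ q : ℚ, q^2 ≠ c) (hc7 : ∀ q : ℚ, q^2 ≠ -7*c)
    (x : K7) : x ^ 2 ≠ (c : K7) := by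
  intro hx2
  haveI : IsCyclotomicExtension {7} ℚ K7 := CyclotomicField.isCyclotomicExtension 7 ℚ
  haveI : IsGalois ℚ K7 := IsCyclotomicExtension.isGalois {7} ℚ K7
  set ζ : K7 := zeta 7 ℚ K7 with hζdef
  have hζ : IsPrimitiveRoot ζ 7 := zeta_spec 7 ℚ K7
  have hζ7 : ζ ^ 7 = 1 := by exact_mod_cast hζ.pow_eq_one
  have hζne : ζ ≠ 1 := hζ.ne_one (by norm_num)
  have hsum : 1 + ζ + ζ^2 + ζ^3 + ζ^4 + ζ^5 + ζ^6 = 0 := by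
    have h2 : (ζ - 1) * (1 + ζ + ζ^2 + ζ^3 + ζ^4 + ζ^5 + ζ^6) = 0 := by
      linear_combination hζ7
    rcases mul_eq_zero.1 h2 with h3 | h3
    · exact absurd (sub_eq_zero.1 h3) hζne
    · exact h3
  -- the automorphism σ : ζ ↦ ζ³
  set e := IsCyclotomicExtension.autEquivPow (n := 7) K7 hirr7 with he
  set u3 : (ZMod 7)ˣ := ZMod.unitOfCoprime 3 (by decide) with hu3
  set σ : K7 ≃ₐ[ℚ] K7 := e.symm u3 with hσ
  have hσζ : σ ζ = ζ ^ 3 := by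
    have h1 : σ ζ = ζ ^ ((hζ.autToPow ℚ σ : ZMod 7)).val := (hζ.autToPow_spec ℚ σ).symm
    have h2 : hζ.autToPow ℚ σ = u3 := by
      have : e σ = u3 := e.apply_symm_apply u3
      rw [he] at this
      simpa [IsCyclotomicExtension.autEquivPow] using this
    rw [h2] at h1
    simpa [hu3, ZMod.val_natCast, show (3 : ZMod 7).val = 3 by decide] using h1
  set y : K7 := 2*(ζ + ζ^2 + ζ^4) + 1 with hy
  have hy2 : y^2 = -7 := by
    rw [hy]
    linear_combination (4*ζ) * hζ7 + 8 * hsum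
  have hσy : σ y = -y := by
    rw [hy]
    have : σ (2*(ζ + ζ^2 + ζ^4) + 1) = 2*(σ ζ + (σ ζ)^2 + (σ ζ)^4) + 1 := by
      simp [map_add, map_mul, map_pow, map_one, map_ofNat]
    rw [this, hσζ]
    linear_combination (2*ζ^5) * hζ7 + 2*hsum
  -- every automorphism is a power of σ
  have hgen : ∀ τ : K7 ≃ₐ[ℚ] K7, ∃ k : ℕ, τ = σ ^ k := by
    intro τ
    have : ∀ u : (ZMod 7)ˣ, ∃ k : Fin 6, u = u3 ^ (k : ℕ) := by decide
    obtain ⟨k, hk⟩ := this (e τ)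
    exact ⟨k, by rw [hσ, ← map_pow, ← hk, MulEquiv.symm_apply_apply]⟩
  -- fixed elements are rational
  have hfix : ∀ z : K7, σ z = z → ∃ q : ℚ, z = algebraMap ℚ K7 q := by
    intro z hz
    have hall : ∀ τ : K7 ≃ₐ[ℚ] K7, τ z = z := by
      intro τ
      obtain ⟨k, rfl⟩ := hgen τ
      induction k with
      | zero => rfl
      | succ n ih => rw [pow_succ, AlgEquiv.mul_apply, hz, ih]
    haveI : FiniteDimensional ℚ K7 := IsCyclotomicExtension.finiteDimensional {7} ℚ K7
    have hbot : z ∈ (⊥ : IntermediateField ℚ K7) := by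
      rw [← IsGalois.fixedField_fixingSubgroup (⊥ : IntermediateField ℚ K7),
        IntermediateField.fixingSubgroup_bot]
      exact fun g => hall g
    rw [IntermediateField.mem_bot] at hbot
    obtain ⟨q, hq⟩ := hbot
    exact ⟨q, hq.symm⟩
  -- σ x = ± x
  have hσx2 : (σ x)^2 = x^2 := by
    rw [← map_pow, hx2, map_ratCast]
  have hcases : σ x = x ∨ σ x = -x := by
    rcases mul_eq_zero.1 (show (σ x - x) * (σ x + x) = 0 by linear_combination hσx2) with h | h
    · exact Or.inl (sub_eq_zero.1 h)
    · exact Or.inr (by linear_combination h)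
  rcases hcases with h | h
  · obtain ⟨q, hq⟩ := hfix x h
    apply hc q
    have hxq : x = ((q : ℚ) : K7) := by rw [hq, eq_ratCast]
    rw [hxq] at hx2
    exact_mod_cast hx2
  · obtain ⟨q, hq⟩ := hfix (x*y) (by rw [map_mul, h, hσy]; ring)
    apply hc7 q
    have hq' : x * y = ((q : ℚ) : K7) := by rw [hq, eq_ratCast]
    have h2 : ((q : ℚ) : K7)^2 = ((-7*c : ℚ) : K7) := by
      push_cast
      linear_combination (-(x*y + ((q:ℚ):K7)))*hq' + (y^2)*hx2 + ((c:ℚ):K7)*hy2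
    exact_mod_cast h2

lemma rat_nsq (n : ℕ) (hn : ¬ IsSquare n) (q : ℚ) : q^2 ≠ (n:ℚ) := by
  intro h
  exact hn ((Rat.isSquare_natCast_iff).mp ⟨q, by linarith [sq q]⟩)

lemma nsq' (n : ℕ) (h1 : Nat.sqrt n * Nat.sqrt n ≠ n) : ¬ IsSquare n := by
  rintro ⟨r, hr⟩
  exact h1 (by rw [← Nat.exists_mul_self n]; exact ⟨r, hr.symm⟩)

lemma keyK5 (x : K7) : x^2 ≠ (5 : K7) := by
  have := keyK 5 (by intro q; have := rat_nsq 5 (nsq' 5 (by norm_num)) q; intro h; apply this; rw [h]; norm_num)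
    (by intro q h; nlinarith [sq_nonneg q]) x
  intro h; apply this; rw [h]; norm_num

lemma keyKm1 (x : K7) : x^2 ≠ (-1 : K7) := by
  have := keyK (-1) (by intro q h; nlinarith [sq_nonneg q])
    (by intro q; have := rat_nsq 7 (nsq' 7 (by norm_num)) q; intro h; apply this; rw [h]; norm_num) x
  intro h; apply this; rw [h]; norm_num

lemma keyKm5 (x : K7) : x^2 ≠ (-5 : K7) := by
  have := keyK (-5) (by intro q h; nlinarith [sq_nonneg q])
    (by intro q; have := rat_nsq 35 (nsq' 35 (by norm_num)) q; intro h; apply this; rw [h]; norm_num) x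
  intro h; apply this; rw [h]; norm_num

end

open Polynomial in
/-- The polynomial `t⁴ + 3t² + 1` is irreducible in `ℚ(ζ₇)[t]`. -/
theorem stmt_0 :
    Irreducible ((X ^ 4 + 3 * X ^ 2 + 1 : Polynomial (CyclotomicField 7 ℚ))) := by
  set K := CyclotomicField 7 ℚ
  set p : K[X] := X ^ 4 + 3 * X ^ 2 + 1 with hp
  by_contra hirr
  have hpm : p.Monic := by
    rw [hp]
    monicity!
  have hpdeg : p.natDegree = 4 := by
    rw [hp]
    compute_degree!
  have hpne0 : p ≠ 0 := hpm.ne_zero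
  have hpnu : ¬ IsUnit p := by
    intro h
    have := natDegree_eq_zero_of_isUnit h
    omega
  -- a root of p gives a contradiction
  have hroot : ∀ z : K, z^4 + 3*z^2 + 1 ≠ 0 := by
    intro z hz
    exact keyK5 (2*z^2+3) (by linear_combination 4*hz)
  obtain ⟨q, hqmon, hqirr, hqdvd⟩ := p.exists_monic_irreducible_factor hpnu
  obtain ⟨r, hr⟩ := hqdvd
  have hqne0 : q ≠ 0 := hqmon.ne_zero
  have hrne0 : r ≠ 0 := by rintro rfl; rw [mul_zero] at hr; exact hpne0 hr
  have hrmon : r.Monic := hqmon.of_mul_monic_left (hr ▸ hpm)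
  have hdegs : q.natDegree + r.natDegree = 4 := by
    rw [← natDegree_mul hqne0 hrne0, ← hr, hpdeg]
  have hq1 : 1 ≤ q.natDegree := hqirr.natDegree_pos
  have hq4 : q.natDegree ≤ 4 := by omega
  -- a monic linear factor of p gives a root
  have hlin : ∀ s : K[X], s.Monic → s.natDegree = 1 → s ∣ p → False := by
    intro s hsmon hsdeg hsdvd
    have hs : s = X + C (s.coeff 0) := hsmon.eq_X_add_C hsdeg
    have : p.eval (-(s.coeff 0)) = 0 := by
      obtain ⟨t, ht⟩ := hsdvd
      rw [ht, eval_mul, hs]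
      simp
    rw [hp] at this
    simp only [eval_add, eval_pow, eval_mul, eval_ofNat, eval_X, eval_one] at this
    exact hroot _ (by linear_combination this)
  interval_cases h : q.natDegree
  · -- degree 1
    exact hlin q hqmon h ⟨r, hr⟩
  · -- degree 2 : the main case
    have hrdeg : r.natDegree = 2 := by omega
    set a := q.coeff 1 with ha
    set b := q.coeff 0 with hb
    set u := r.coeff 1 with hu
    set v := r.coeff 0 with hv
    have hqe : q = X^2 + C a * X + C b := by
      have h3 : q.natDegree < 3 := by omega
      have hc2 : q.coeff 2 = 1 := by rw [← h]; exact hqmon.coeff_natDegree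
      conv_lhs => rw [q.as_sum_range' 3 h3]
      simp only [Finset.sum_range_succ, Finset.sum_range_zero, zero_add,
        ← C_mul_X_pow_eq_monomial, hc2, C_1, ← ha, ← hb]
      ring
    have hre : r = X^2 + C u * X + C v := by
      have h3 : r.natDegree < 3 := by omega
      have hc2 : r.coeff 2 = 1 := by rw [← hrdeg]; exact hrmon.coeff_natDegree
      conv_lhs => rw [r.as_sum_range' 3 h3]
      simp only [Finset.sum_range_succ, Finset.sum_range_zero, zero_add,
        ← C_mul_X_pow_eq_monomial, hc2, C_1, ← hu, ← hv]
      ring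
    have hexp : X^4 + C 3 * X^2 + C 1 = X^4 + C (a+u) * X^3 + C (b+v+a*u) * X^2 + C (a*v+b*u) * X + C (b*v) := by
      have hp' : p = X^4 + C 3 * X^2 + C 1 := by rw [hp]; simp [map_ofNat]
      rw [← hp', hr, hqe, hre]
      simp only [map_add, map_mul]
      ring
    have e3 : a + u = 0 := by
      have h3 := congrArg (fun f => coeff f 3) hexp
      simpa [coeff_add, coeff_C_mul, coeff_X_pow, coeff_X, coeff_C, coeff_one, add_mul, mul_assoc] using h3.symm
    have e2 : b + v + a*u = 3 := by
      have h2 := congrArg (fun f => coeff f 2) hexp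
      simpa [coeff_add, coeff_C_mul, coeff_X_pow, coeff_X, coeff_C, coeff_one, add_mul, mul_assoc] using h2.symm
    have e1 : a*v + b*u = 0 := by
      have h1 := congrArg (fun f => coeff f 1) hexp
      simpa [coeff_add, coeff_C_mul, coeff_X_pow, coeff_X, coeff_C, coeff_one, add_mul, mul_assoc] using h1.symm
    have e0 : b*v = 1 := by
      have h0 := congrArg (fun f => coeff f 0) hexp
      simpa [coeff_add, coeff_C_mul, coeff_X_pow, coeff_X, coeff_C, coeff_one, add_mul, mul_assoc] using h0.symm
    have hu' : u = -a := by linear_combination e3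
    have hsplit : a * (v - b) = 0 := by linear_combination e1 - b*e3
    rcases mul_eq_zero.1 hsplit with hA | hB
    · -- a = 0 : b + v = 3, b v = 1
      exact keyK5 (b - v) (by linear_combination (b+v+3)*e2 - 4*e0 - ((b+v+3)*u)*hA)
    · -- v = b : b² = 1
      have hb2 : (b - 1) * (b + 1) = 0 := by linear_combination e0 - b*hB
      rcases mul_eq_zero.1 hb2 with h1 | h1
      · exact keyKm1 a (by linear_combination -e2 + a*hu' + hB + 2*h1)
      · exact keyKm5 a (by linear_combination -e2 + a*hu' + hB + 2*h1)
  · -- degree 3 : r is linear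
    exact hlin r hrmon (by omega) ⟨q, by rw [hr, mul_comm]⟩
  · -- degree 4 : p is irreducible
    apply hirr
    have hr0 : r.natDegree = 0 := by omega
    have hrC : r = C (r.coeff 0) := eq_C_of_natDegree_eq_zero hr0
    have hrunit : IsUnit r := by
      rw [hrC]
      exact isUnit_C.2 (isUnit_iff_ne_zero.2 (fun h0 => hrne0 (by rw [hrC, h0, map_zero])))
    exact (Associated.irreducible ⟨hrunit.unit, by rw [hr]; rfl⟩ hqirr)
end

section
/- Let x be an element of the 7th cyclotomic field ℚ(ζ₇) such that x² lies in ℚ (i.e., in the image of the structure map ℚ → ℚ(ζ₇)) but x itself does not lie in ℚ. Then there exists a nonzero rational number r with x² = −7·r². -/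
open IsCyclotomicExtension Polynomial

lemma aux_fixed_7 (y : CyclotomicField 7 ℚ)
    (h : ∀ σ : CyclotomicField 7 ℚ ≃ₐ[ℚ] CyclotomicField 7 ℚ, σ y = y) :
    y ∈ Set.range (algebraMap ℚ (CyclotomicField 7 ℚ)) := by
  haveI : IsCyclotomicExtension {7} ℚ (CyclotomicField 7 ℚ) := CyclotomicField.isCyclotomicExtension 7 ℚ
  haveI := IsCyclotomicExtension.finiteDimensional (S := {(7 : ℕ)}) ℚ (CyclotomicField 7 ℚ)
  haveI : IsGalois ℚ (CyclotomicField 7 ℚ) :=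
    IsCyclotomicExtension.isGalois (S := {7}) (K := ℚ) (L := CyclotomicField 7 ℚ)
  have hb : y ∈ (⊥ : IntermediateField ℚ (CyclotomicField 7 ℚ)) := by
    rw [← IsGalois.fixedField_fixingSubgroup (⊥ : IntermediateField ℚ (CyclotomicField 7 ℚ))]
    intro σ
    exact h σ
  rwa [IntermediateField.mem_bot] at hb

/-- If `x ∈ ℚ(ζ₇)` has `x² ∈ ℚ` but `x ∉ ℚ`, then `x² = -7·r²` for some nonzero
rational `r`. -/
theorem stmt_7 (x : CyclotomicField 7 ℚ)
    (hsq : x ^ 2 ∈ Set.range (algebraMap ℚ (CyclotomicField 7 ℚ)))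
    (hx : x ∉ Set.range (algebraMap ℚ (CyclotomicField 7 ℚ))) :
    ∃ r : ℚ, r ≠ 0 ∧ x ^ 2 = -7 * (algebraMap ℚ (CyclotomicField 7 ℚ) r) ^ 2 := by
  haveI : IsCyclotomicExtension {7} ℚ (CyclotomicField 7 ℚ) := CyclotomicField.isCyclotomicExtension 7 ℚ
  have hirr : Irreducible (cyclotomic 7 ℚ) :=
    cyclotomic.irreducible_rat (by norm_num)
  set ζ : CyclotomicField 7 ℚ := zeta 7 ℚ (CyclotomicField 7 ℚ) with hζdef
  have hζ : IsPrimitiveRoot ζ 7 := zeta_spec 7 ℚ (CyclotomicField 7 ℚ)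
  have h7 : ζ ^ 7 = 1 := by
    have := hζ.pow_eq_one
    norm_num at this ⊢
    exact this
  have hne : ζ ≠ 1 := by
    intro h
    have := hζ.ne_one (by norm_num)
    exact this (by exact_mod_cast h)
  have hsum : 1 + ζ + ζ ^ 2 + ζ ^ 3 + ζ ^ 4 + ζ ^ 5 + ζ ^ 6 = 0 := by
    have hz : (ζ - 1) * (1 + ζ + ζ ^ 2 + ζ ^ 3 + ζ ^ 4 + ζ ^ 5 + ζ ^ 6) = 0 := by
      linear_combination h7
    rcases mul_eq_zero.1 hz with h | h
    · exact absurd (sub_eq_zero.1 h) hne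
    · exact h
  set g : CyclotomicField 7 ℚ := 1 + 2 * (ζ + ζ ^ 2 + ζ ^ 4) with hgdef
  have hg : g ^ 2 = -7 := by
    rw [hgdef]
    linear_combination (4 : CyclotomicField 7 ℚ) * ζ * h7 + 8 * hsum
  -- the Galois group
  set e := autEquivPow (CyclotomicField 7 ℚ) hirr with hedef
  set u3 : (ZMod 7)ˣ := ZMod.unitOfCoprime 3 (by decide) with hu3def
  set σ₀ := e.symm u3 with hσ₀def
  have hσζ : σ₀ ζ = ζ ^ 3 := by
    have hspec := hζ.autToPow_spec ℚ σ₀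
    have happ : hζ.autToPow ℚ σ₀ = u3 := e.apply_symm_apply u3
    rw [happ] at hspec
    have : ((u3 : ZMod 7)).val = 3 := by decide
    rw [this] at hspec
    exact hspec.symm
  have hσg : σ₀ g = -g := by
    have : σ₀ g = 1 + 2 * (ζ ^ 3 + (ζ ^ 3) ^ 2 + (ζ ^ 3) ^ 4) := by
      rw [hgdef]
      simp [map_add, map_mul, map_pow, map_one, map_ofNat, hσζ]
    rw [this, hgdef]
    linear_combination (2 : CyclotomicField 7 ℚ) * ζ ^ 5 * h7 + 2 * hsum
  -- σ₀ generates
  have hgen : ∀ u : (ZMod 7)ˣ, ∃ k : Fin 6, u = u3 ^ (k : ℕ) := by decide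
  have hσgen : ∀ σ : CyclotomicField 7 ℚ ≃ₐ[ℚ] CyclotomicField 7 ℚ, ∃ k : ℕ, σ = σ₀ ^ k := by
    intro σ
    obtain ⟨k, hk⟩ := hgen (e σ)
    refine ⟨k, e.injective ?_⟩
    rw [map_pow, hσ₀def, e.apply_symm_apply, ← hk]
  have hfix : ∀ y : CyclotomicField 7 ℚ, σ₀ y = y →
      y ∈ Set.range (algebraMap ℚ (CyclotomicField 7 ℚ)) := by
    intro y hy
    apply aux_fixed_7
    intro σ
    obtain ⟨k, rfl⟩ := hσgen σ
    clear hσgen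
    induction k with
    | zero => simp
    | succ n ih =>
      rw [pow_succ, AlgEquiv.mul_apply, hy, ih]
  -- σ₀ x = ± x
  have hsqfix : (σ₀ x) ^ 2 = x ^ 2 := by
    obtain ⟨q, hq⟩ := hsq
    rw [← hq, ← map_pow, ← hq, AlgEquiv.commutes]
  have hcases : σ₀ x = x ∨ σ₀ x = -x := by
    have : (σ₀ x - x) * (σ₀ x + x) = 0 := by linear_combination hsqfix
    rcases mul_eq_zero.1 this with h | h
    · left; linear_combination h
    · right; linear_combination h
  rcases hcases with h | h
  · exact absurd (hfix x h) hx
  · have hgne : g ≠ 0 := by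
      intro h0
      rw [h0] at hg
      norm_num at hg
    have hy : σ₀ (x / g) = x / g := by
      rw [map_div₀, h, hσg, neg_div_neg_eq]
    obtain ⟨r, hr⟩ := hfix _ hy
    have hxr : x = algebraMap ℚ (CyclotomicField 7 ℚ) r * g := by
      rw [hr, div_mul_cancel₀ _ hgne]
    refine ⟨r, ?_, ?_⟩
    · intro h0
      rw [h0, map_zero, zero_mul] at hxr
      exact hx ⟨0, by rw [map_zero, hxr]⟩
    · rw [hxr, mul_pow, hg]
      ring
end

section
/- Let n be a natural number, let B₁ and B₂ be n×n integer matrices, and let A be the 2n×2n block matrix [[0, B₁], [B₂, 0]]. Then there exists an abelian group G such that the cokernel ℤ^{2n}/(A + Aᵀ)ℤ^{2n} of the symmetric matrix A + Aᵀ (acting as a linear map ℤ^{2n} → ℤ^{2n}) is isomorphic to the direct sum G ⊕ G. -/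
open Matrix

/-- Cokernels of equivalent matrices are isomorphic. -/
noncomputable def cokerEquivOfFactor {ι : Type} [Fintype ι] [DecidableEq ι]
    (C D P Q : Matrix ι ι ℤ) (hP : IsUnit P.det) (hQ : IsUnit Q.det)
    (h : C = P * D * Q) :
    ((ι → ℤ) ⧸ LinearMap.range (Matrix.toLin' D)) ≃ₗ[ℤ]
      ((ι → ℤ) ⧸ LinearMap.range (Matrix.toLin' C)) := by
  have iP : Invertible P := P.invertibleOfIsUnitDet hP
  have iQ : Invertible Q := Q.invertibleOfIsUnitDet hQ
  refine Submodule.Quotient.equiv _ _ (P.toLinearEquiv' iP) ?_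
  have hQs : LinearMap.range (Matrix.toLin' Q) = ⊤ := by
    rw [LinearMap.range_eq_top]
    exact (Q.toLinearEquiv' iQ).surjective
  have : Matrix.toLin' C =
      (Matrix.toLin' P ∘ₗ Matrix.toLin' D) ∘ₗ Matrix.toLin' Q := by
    rw [h, Matrix.toLin'_mul, Matrix.toLin'_mul]
  rw [this, LinearMap.range_comp_of_range_eq_top _ hQs, LinearMap.range_comp]
  rfl

/-- Quotient of a product by a product of submodules. -/
noncomputable def quotProdEquiv {X Y : Type} [AddCommGroup X] [AddCommGroup Y]
    (N : Submodule ℤ X) (M : Submodule ℤ Y) :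
    ((X × Y) ⧸ N.prod M) ≃ₗ[ℤ] (X ⧸ N) × (Y ⧸ M) := by
  refine (Submodule.quotEquivOfEq _ _ ?_).trans
    (LinearMap.quotKerEquivOfSurjective (N.mkQ.prodMap M.mkQ) ?_)
  · rw [LinearMap.ker_prodMap, Submodule.ker_mkQ, Submodule.ker_mkQ]
  · exact Function.Surjective.prodMap
      (Submodule.mkQ_surjective N) (Submodule.mkQ_surjective M)

noncomputable def cokerBlockDiag (n : ℕ) (D D' : Matrix (Fin n) (Fin n) ℤ) :
    ((Fin n ⊕ Fin n → ℤ) ⧸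
        LinearMap.range (Matrix.toLin' (Matrix.fromBlocks D 0 0 D'))) ≃ₗ[ℤ]
      ((Fin n → ℤ) ⧸ LinearMap.range (Matrix.toLin' D)) ×
        ((Fin n → ℤ) ⧸ LinearMap.range (Matrix.toLin' D')) := by
  set ψ := LinearEquiv.sumArrowLequivProdArrow (Fin n) (Fin n) ℤ ℤ with hψ
  have key : ∀ x, ψ (Matrix.toLin' (Matrix.fromBlocks D 0 0 D') x) =
      ((Matrix.toLin' D) (ψ x).1, (Matrix.toLin' D') (ψ x).2) := by
    intro x
    have h1 : (ψ x).1 = x ∘ Sum.inl := rfl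
    have h2 : (ψ x).2 = x ∘ Sum.inr := rfl
    ext i <;>
      simp [hψ, LinearEquiv.sumArrowLequivProdArrow, Equiv.sumArrowEquivProdArrow,
        Matrix.toLin'_apply, Matrix.fromBlocks_mulVec, h1, h2]
  have hmap : Submodule.map (ψ : (Fin n ⊕ Fin n → ℤ) →ₗ[ℤ] (Fin n → ℤ) × (Fin n → ℤ))
      (LinearMap.range (Matrix.toLin' (Matrix.fromBlocks D 0 0 D'))) =
      (LinearMap.range (Matrix.toLin' D)).prod
        (LinearMap.range (Matrix.toLin' D')) := by
    apply le_antisymm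
    · rintro _ ⟨_, ⟨x, rfl⟩, rfl⟩
      rw [LinearEquiv.coe_coe, key]
      exact ⟨⟨_, rfl⟩, ⟨_, rfl⟩⟩
    · rintro ⟨a, b⟩ ⟨⟨u, hu⟩, ⟨v, hv⟩⟩
      refine ⟨_, ⟨ψ.symm (u, v), rfl⟩, ?_⟩
      rw [LinearEquiv.coe_coe, key, ψ.apply_symm_apply]
      simp only at hu hv ⊢
      rw [hu, hv]
  exact (Submodule.Quotient.equiv _ _ ψ hmap).trans (quotProdEquiv _ _)

theorem exists_symm_snf (n : ℕ) (C : Matrix (Fin n) (Fin n) ℤ) :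
    ∃ P D Q : Matrix (Fin n) (Fin n) ℤ,
      IsUnit P.det ∧ IsUnit Q.det ∧ Dᵀ = D ∧ C = P * D * Q := by
  classical
  set f : (Fin n → ℤ) →ₗ[ℤ] (Fin n → ℤ) := Matrix.toLin' C with hf
  obtain ⟨m, snf⟩ := (LinearMap.range f).smithNormalForm (Pi.basisFun ℤ (Fin n))
  obtain ⟨bM, bN, femb, a, hsnf⟩ := snf
  obtain ⟨k, bK⟩ := (LinearMap.ker f).basisOfPid (Pi.basisFun ℤ (Fin n))
  -- a section of the range restriction
  have : Module.Free ℤ (LinearMap.range f) := Module.Free.of_basis bN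
  obtain ⟨s, hs⟩ := LinearMap.exists_rightInverse_of_surjective
    (f.rangeRestrict) (LinearMap.range_rangeRestrict f)
  have hs' : ∀ y : LinearMap.range f, f (s y) = (y : Fin n → ℤ) := by
    intro y
    have := congrArg (fun g => (g y : LinearMap.range f)) hs
    simpa [LinearMap.rangeRestrict] using congrArg Subtype.val this
  -- the splitting equivalence
  have hker : ∀ z : Fin n → ℤ, z - s (f.rangeRestrict z) ∈ LinearMap.ker f := by
    intro z
    simp only [LinearMap.mem_ker, map_sub, hs']
    simp [LinearMap.rangeRestrict]
  let fwd : (LinearMap.ker f × LinearMap.range f) →ₗ[ℤ] (Fin n → ℤ) :=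
    LinearMap.coprod (LinearMap.ker f).subtype s
  let bwd : (Fin n → ℤ) →ₗ[ℤ] (LinearMap.ker f × LinearMap.range f) :=
    LinearMap.prod
      ((LinearMap.id - s ∘ₗ f.rangeRestrict).codRestrict (LinearMap.ker f) hker)
      f.rangeRestrict
  have hrrk : ∀ x : LinearMap.ker f, f.rangeRestrict (x : Fin n → ℤ) = 0 := by
    intro x
    ext
    simp [LinearMap.rangeRestrict, LinearMap.mem_ker.mp x.2]
  let φ : (LinearMap.ker f × LinearMap.range f) ≃ₗ[ℤ] (Fin n → ℤ) :=
    LinearEquiv.ofLinear fwd bwd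
      (by
        apply LinearMap.ext; intro z
        simp [fwd, bwd, sub_add_cancel])
      (by
        apply LinearMap.ext; rintro ⟨x, y⟩
        have hrrs : ∀ y, f.rangeRestrict (s y) = y := LinearMap.congr_fun hs
        have key : f.rangeRestrict ((x : Fin n → ℤ) + s y) = y := by
          rw [map_add, hrrk, hrrs, zero_add]
        apply Prod.ext
        · apply Subtype.ext
          show ((x : Fin n → ℤ) + s y) - s (f.rangeRestrict ((x : Fin n → ℤ) + s y))
              = (x : Fin n → ℤ)
          rw [key]
          abel
        · show f.rangeRestrict ((x : Fin n → ℤ) + s y) = y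
          exact key)
  have hφ : ∀ p : LinearMap.ker f × LinearMap.range f,
      φ p = (p.1 : Fin n → ℤ) + s p.2 := fun p => rfl
  let b1 : Module.Basis (Fin k ⊕ Fin m) ℤ (Fin n → ℤ) := (bK.prod bN).map φ
  have hb1l : ∀ i, f (b1 (Sum.inl i)) = 0 := by
    intro i
    have : b1 (Sum.inl i) = (bK i : Fin n → ℤ) := by
      simp [b1, hφ, Module.Basis.prod_apply_inl_fst, Module.Basis.prod_apply_inl_snd]
    rw [this]
    exact (bK i).2
  have hb1r : ∀ i, f (b1 (Sum.inr i)) = a i • bM (femb i) := by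
    intro i
    have : b1 (Sum.inr i) = s (bN i) := by
      simp [b1, hφ, Module.Basis.prod_apply_inr_fst, Module.Basis.prod_apply_inr_snd]
    rw [this, hs', hsnf]
  -- cardinality
  have hkm : k + m = n := by
    have e0 := b1.indexEquiv (Pi.basisFun ℤ (Fin n))
    simpa using Fintype.card_congr e0
  -- the permutation σ
  let p : Fin n → Prop := fun c => ∃ i, femb i = c
  have hpdec : DecidablePred p := fun c => Fintype.decidableExistsFintype
  let e₁ : Fin m ≃ {c // p c} :=
    Equiv.ofBijective (fun i => ⟨femb i, ⟨i, rfl⟩⟩)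
      ⟨fun i j hij => femb.injective (congrArg Subtype.val hij),
       fun ⟨c, i, hi⟩ => ⟨i, Subtype.ext hi⟩⟩
  have hcardp : Fintype.card {c // p c} = m := (Fintype.card_congr e₁.symm).trans (by simp)
  have hcardnp : Fintype.card {c // ¬ p c} = k := by
    rw [Fintype.card_subtype_compl, hcardp, Fintype.card_fin]
    omega
  let e₂ : Fin k ≃ {c // ¬ p c} := Fintype.equivOfCardEq (by rw [hcardnp, Fintype.card_fin])
  let σ : (Fin k ⊕ Fin m) ≃ Fin n :=
    (Equiv.sumCongr e₂ e₁).trans ((Equiv.sumComm _ _).trans (Equiv.sumCompl p))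
  have hσr : ∀ i, σ (Sum.inr i) = femb i := fun i => rfl
  have hσl : ∀ j, ¬ p (σ (Sum.inl j)) := fun j => (e₂ j).2
  -- the diagonal matrix
  let w : Fin n → ℤ := fun c => if h : p c then a (e₁.symm ⟨c, h⟩) else 0
  have hw : ∀ i, w (femb i) = a i := by
    intro i
    have hp : p (femb i) := ⟨i, rfl⟩
    have : e₁.symm ⟨femb i, hp⟩ = i := e₁.injective (by simp [e₁]; rfl)
    simp [w, hp, this]
  let D : Matrix (Fin n) (Fin n) ℤ := Matrix.diagonal w
  -- change of basis matrices
  let std := Pi.basisFun ℤ (Fin n)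
  let P : Matrix (Fin n) (Fin n) ℤ := LinearMap.toMatrix bM std LinearMap.id
  let Q' : Matrix (Fin k ⊕ Fin m) (Fin n) ℤ := LinearMap.toMatrix std b1 LinearMap.id
  let D' : Matrix (Fin n) (Fin k ⊕ Fin m) ℤ := LinearMap.toMatrix b1 bM f
  let R' : Matrix (Fin n) (Fin k ⊕ Fin m) ℤ := LinearMap.toMatrix b1 std LinearMap.id
  have hPdef : P = LinearMap.toMatrix bM std LinearMap.id := rfl
  have hQ'def : Q' = LinearMap.toMatrix std b1 LinearMap.id := rfl
  have hD'def : D' = LinearMap.toMatrix b1 bM f := rfl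
  have hR'def : R' = LinearMap.toMatrix b1 std LinearMap.id := rfl
  have hDdef : D = Matrix.diagonal w := rfl
  have hC : C = P * D' * Q' := by
    have h0 : C = LinearMap.toMatrix std std f := by
      rw [hf, ← Matrix.toLin_eq_toLin', LinearMap.toMatrix_toLin]
    have h1 : (f : (Fin n → ℤ) →ₗ[ℤ] (Fin n → ℤ)) =
        LinearMap.id ∘ₗ (f ∘ₗ LinearMap.id) := by simp
    rw [h0, h1, LinearMap.toMatrix_comp std bM std, LinearMap.toMatrix_comp std b1 bM,
      ← Matrix.mul_assoc, hPdef, hD'def, hQ'def]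
  have hD' : D' = D.submatrix id σ := by
    ext r j
    rw [Matrix.submatrix_apply, hDdef, hD'def]
    rcases j with j | i
    · have hL : LinearMap.toMatrix b1 bM f r (Sum.inl j) = 0 := by
        simp [LinearMap.toMatrix_apply, hb1l j]
      rw [hL, Matrix.diagonal_apply]
      have hw0 : w (σ (Sum.inl j)) = 0 := by
        simp only [w]
        rw [dif_neg (hσl j)]
      by_cases hcase : id r = σ (Sum.inl j)
      · rw [if_pos hcase, hcase, hw0]
      · rw [if_neg hcase]
    · have hL : LinearMap.toMatrix b1 bM f r (Sum.inr i) =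
          if femb i = r then a i else 0 := by
        rw [LinearMap.toMatrix_apply, hb1r i, _root_.map_smul, Module.Basis.repr_self]
        simp [Finsupp.single_apply]
      rw [hL, hσr, Matrix.diagonal_apply]
      by_cases h : femb i = r
      · have h2 : id r = femb i := h.symm
        rw [if_pos h, if_pos h2, h2, hw]
      · rw [if_neg h, if_neg (fun hh : id r = femb i => h hh.symm)]
  -- P is invertible
  have hPunit : IsUnit P.det := by
    have h1 : P * LinearMap.toMatrix std bM LinearMap.id = 1 := by
      rw [hPdef, ← LinearMap.toMatrix_comp std bM std, LinearMap.id_comp,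
        LinearMap.toMatrix_id]
    have hdet := congrArg Matrix.det h1
    rw [Matrix.det_mul, Matrix.det_one] at hdet
    exact IsUnit.of_mul_eq_one _ hdet
  -- Q
  let Q : Matrix (Fin n) (Fin n) ℤ := Q'.submatrix σ.symm id
  have hQdef : Q = Q'.submatrix σ.symm id := rfl
  have hRQ : R' * Q' = 1 := by
    rw [hR'def, hQ'def, ← LinearMap.toMatrix_comp std b1 std, LinearMap.id_comp,
      LinearMap.toMatrix_id]
  have hQunit : IsUnit Q.det := by
    have h1 : R'.submatrix id σ.symm * Q = 1 := by
      rw [hQdef, Matrix.submatrix_mul_equiv R' Q' id σ.symm id, hRQ]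
      rfl
    have hdet := congrArg Matrix.det h1
    rw [Matrix.det_mul, Matrix.det_one] at hdet
    exact IsUnit.of_mul_eq_one _ (by rw [mul_comm] at hdet; exact hdet)
  refine ⟨P, D, Q, hPunit, hQunit, ?_, ?_⟩
  · rw [hDdef, Matrix.diagonal_transpose]
  · have hQback : Q.submatrix σ id = Q' := by
      rw [hQdef, Matrix.submatrix_submatrix]
      have : (σ.symm ∘ σ) = id := by
        funext x; simp
      rw [this]
      simp
    calc C = P * D' * Q' := hC
    _ = P * (D.submatrix id σ * Q.submatrix σ id) := by
        rw [hD', hQback, Matrix.mul_assoc]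
    _ = P * (D * Q) := by rw [Matrix.submatrix_mul_equiv D Q id σ id]; rfl
    _ = P * D * Q := by rw [Matrix.mul_assoc]


/-- If `A = [[0, B₁], [B₂, 0]]` is a hyperbolic integer matrix, then the cokernel
of `A + Aᵀ : ℤ^{2n} → ℤ^{2n}` is isomorphic to `G ⊕ G` for some abelian group `G`. -/
theorem stmt_8 (n : ℕ) (B₁ B₂ : Matrix (Fin n) (Fin n) ℤ) :
    ∃ (G : Type) (_ : AddCommGroup G),
      Nonempty
        (((Fin n ⊕ Fin n → ℤ) ⧸
            LinearMap.range
              (Matrix.toLin'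
                (Matrix.fromBlocks 0 B₁ B₂ 0 + (Matrix.fromBlocks 0 B₁ B₂ 0)ᵀ)))
          ≃+ G × G) := by
  classical
  set C : Matrix (Fin n) (Fin n) ℤ := B₁ + B₂ᵀ with hCdef
  have hA : Matrix.fromBlocks 0 B₁ B₂ 0 + (Matrix.fromBlocks 0 B₁ B₂ 0)ᵀ =
      Matrix.fromBlocks 0 C Cᵀ 0 := by
    rw [Matrix.fromBlocks_transpose, Matrix.fromBlocks_add]
    have h1 : Cᵀ = B₂ + B₁ᵀ := by
      rw [hCdef, Matrix.transpose_add, Matrix.transpose_transpose, add_comm]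
    rw [h1, hCdef]
    simp
  rw [hA]
  obtain ⟨P, D, Q, hP, hQ, hDsym, hC⟩ := exists_symm_snf n C
  set Pb : Matrix (Fin n ⊕ Fin n) (Fin n ⊕ Fin n) ℤ := Matrix.fromBlocks P 0 0 Qᵀ with hPb
  set Db : Matrix (Fin n ⊕ Fin n) (Fin n ⊕ Fin n) ℤ := Matrix.fromBlocks D 0 0 D with hDb
  set J : Matrix (Fin n ⊕ Fin n) (Fin n ⊕ Fin n) ℤ := Matrix.fromBlocks 0 1 1 0 with hJ
  set Qb : Matrix (Fin n ⊕ Fin n) (Fin n ⊕ Fin n) ℤ :=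
    Matrix.fromBlocks Q 0 0 Pᵀ * J with hQb
  have hCt : Cᵀ = Qᵀ * D * Pᵀ := by
    rw [hC]
    simp only [Matrix.transpose_mul, Matrix.mul_assoc]
    rw [hDsym]
  have hfact : Matrix.fromBlocks 0 C Cᵀ 0 = Pb * Db * Qb := by
    rw [hPb, hDb, hQb, hJ, ← Matrix.mul_assoc, Matrix.fromBlocks_multiply,
      Matrix.fromBlocks_multiply, Matrix.fromBlocks_multiply]
    simp [hC, hCt, hDsym, Matrix.mul_assoc]
  have hPbu : IsUnit Pb.det := by
    rw [hPb, Matrix.det_fromBlocks_zero₂₁, Matrix.det_transpose]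
    exact hP.mul hQ
  have hJu : IsUnit J.det := by
    have : J * J = 1 := by
      rw [hJ, Matrix.fromBlocks_multiply]
      simp [Matrix.fromBlocks_one]
    exact IsUnit.of_mul_eq_one _ (by
      have := congrArg Matrix.det this
      rwa [Matrix.det_mul, Matrix.det_one] at this)
  have hQbu : IsUnit Qb.det := by
    rw [hQb, Matrix.det_mul, Matrix.det_fromBlocks_zero₂₁, Matrix.det_transpose]
    exact (hQ.mul hP).mul hJu
  refine ⟨(Fin n → ℤ) ⧸ LinearMap.range (Matrix.toLin' D), inferInstance, ⟨?_⟩⟩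
  have e1 := cokerEquivOfFactor (Matrix.fromBlocks 0 C Cᵀ 0) Db Pb Qb hPbu hQbu hfact
  have e2 := cokerBlockDiag n D D
  exact (e1.symm.trans e2).toAddEquiv
end

section
/- Let n be a natural number, let B₁ and B₂ be n×n real matrices, let A denote the 2n×2n complex matrix with block form [[0, B₁], [B₂, 0]] (real entries viewed in ℂ), and let ω be a complex number with |ω| = 1. Then the matrix M = (1−ω)·A + (1−conj(ω))·Aᵀ is Hermitian, and the number of its eigenvalues (counted with multiplicity) that are strictly positive equals the number that are strictly negative; in particular its signature is zero. -/
open Matrix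

section Aux
open Polynomial
variable {m : Type*} [Fintype m] [DecidableEq m]

lemma my_charpoly_conj (P Q M : Matrix m m ℂ)
    (hPQ : P * Q = 1) : (P * M * Q).charpoly = M.charpoly := by
  unfold Matrix.charpoly
  have hcomm : (Matrix.scalar m (X : ℂ[X])) * Q.map (C : ℂ →+* ℂ[X])
      = Q.map (C : ℂ →+* ℂ[X]) * Matrix.scalar m (X : ℂ[X]) :=
    ((Matrix.scalar_commute (X : ℂ[X]) (fun r' => Commute.all _ _) _)).eq
  have hone : P.map (C : ℂ →+* ℂ[X]) * Q.map (C : ℂ →+* ℂ[X]) = 1 := by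
    rw [← Matrix.map_mul, hPQ, Matrix.map_one _ (map_zero _) (map_one _)]
  have hkey : charmatrix (P * M * Q) =
      P.map (C : ℂ →+* ℂ[X]) * charmatrix M * Q.map (C : ℂ →+* ℂ[X]) := by
    unfold charmatrix
    simp only [RingHom.mapMatrix_apply, mul_sub, sub_mul]
    congr 1
    · rw [mul_assoc, hcomm, ← mul_assoc, hone, one_mul]
    · simp [Matrix.map_mul]
  rw [hkey, det_mul, det_mul, mul_right_comm, ← det_mul, hone]
  simp

lemma my_charpoly_diagonal (d : m → ℂ) :
    (Matrix.diagonal d).charpoly = ∏ i, (X - C (d i)) := by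
  unfold Matrix.charpoly charmatrix
  have : Matrix.scalar m (X : ℂ[X]) - (C : ℂ →+* ℂ[X]).mapMatrix (diagonal d)
      = diagonal (fun i => X - C (d i)) := by
    simp [Matrix.scalar, RingHom.mapMatrix_apply, Matrix.diagonal_map, ← Matrix.diagonal_sub]
  rw [this, det_diagonal]

/-- The eigenvalue multiset of a Hermitian matrix conjugate (by an involution) to its
negative is stable under negation. -/
lemma my_key (M : Matrix m m ℂ) (D : Matrix m m ℂ) (hD : D * D = 1)
    (hDMD : D * M * D = -M) (hHerm : M.IsHermitian) :
    (Finset.univ.val.map hHerm.eigenvalues) =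
      Multiset.map Neg.neg (Finset.univ.val.map hHerm.eigenvalues) := by
  set eig := hHerm.eigenvalues with heig
  set U : Matrix m m ℂ := (hHerm.eigenvectorUnitary : Matrix m m ℂ) with hU
  have hU1 : U * star U = 1 := Matrix.mem_unitaryGroup_iff.mp (hHerm.eigenvectorUnitary).2
  have hspec : M = U * diagonal (RCLike.ofReal ∘ eig) * star U := hHerm.spectral_theorem
  have h1 : M.charpoly = ∏ i, (X - C ((eig i : ℂ))) := by
    rw [hspec, my_charpoly_conj _ _ _ hU1, my_charpoly_diagonal]
    rfl
  have hdneg : (diagonal (fun i => -(eig i : ℂ)))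
      = -diagonal (RCLike.ofReal ∘ eig : m → ℂ) := by
    rw [← Matrix.diagonal_neg]; rfl
  have hneg : -M = U * diagonal (fun i => -(eig i : ℂ)) * star U := by
    rw [hspec, hdneg, Matrix.mul_neg, Matrix.neg_mul]
  have h2 : (-M).charpoly = ∏ i, (X - C (-(eig i : ℂ))) := by
    rw [hneg, my_charpoly_conj _ _ _ hU1, my_charpoly_diagonal]
  have h3 : M.charpoly = (-M).charpoly := by
    conv_rhs => rw [← hDMD]
    rw [my_charpoly_conj _ _ _ hD]
  have hroots : (Finset.univ.val.map (fun i => (eig i : ℂ)))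
      = (Finset.univ.val.map (fun i => (-(eig i) : ℂ))) := by
    have e1 : M.charpoly = ((Finset.univ.val.map (fun i => (eig i : ℂ))).map
        (fun a => X - C a)).prod := by
      rw [h1, Multiset.map_map]; rfl
    have e2 : M.charpoly = ((Finset.univ.val.map (fun i => (-(eig i) : ℂ))).map
        (fun a => X - C a)).prod := by
      rw [h3, h2, Multiset.map_map]; rfl
    have := congrArg Polynomial.roots (e1.symm.trans e2)
    rwa [Polynomial.roots_multiset_prod_X_sub_C, Polynomial.roots_multiset_prod_X_sub_C] at this
  have : Multiset.map (Complex.ofReal) (Finset.univ.val.map eig)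
      = Multiset.map (Complex.ofReal) (Multiset.map Neg.neg (Finset.univ.val.map eig)) := by
    rw [Multiset.map_map, Multiset.map_map, Multiset.map_map]
    convert hroots using 2
    all_goals simp [Function.comp]
  exact Multiset.map_injective Complex.ofReal_injective this

end Aux

/-- For a hyperbolic real matrix `A = [[0,B₁],[B₂,0]]` (viewed in `ℂ`) and a unit
complex number `ω`, the matrix `M = (1-ω)A + (1-ω̄)Aᵀ` is Hermitian and has as many
strictly positive eigenvalues as strictly negative ones (with multiplicity); in
particular its signature is zero. -/
theorem stmt_10 (n : ℕ) (B₁ B₂ : Matrix (Fin n) (Fin n) ℝ) (ω : ℂ) (hω : ‖ω‖ = 1)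
    (A : Matrix (Fin n ⊕ Fin n) (Fin n ⊕ Fin n) ℂ)
    (hA : A = (Matrix.fromBlocks 0 B₁ B₂ 0).map Complex.ofReal)
    (M : Matrix (Fin n ⊕ Fin n) (Fin n ⊕ Fin n) ℂ)
    (hM : M = (1 - ω) • A + (1 - (starRingEnd ℂ) ω) • Aᵀ) :
    ∃ hHerm : M.IsHermitian,
      (Finset.univ.filter fun i => 0 < hHerm.eigenvalues i).card =
        (Finset.univ.filter fun i => hHerm.eigenvalues i < 0).card := by
  -- A has real entries, so Aᴴ = Aᵀ
  have hAH : Aᴴ = Aᵀ := by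
    subst hA
    ext i j
    simp [conjTranspose_apply, Matrix.map_apply]
  have hHerm : M.IsHermitian := by
    unfold Matrix.IsHermitian
    have hATH : Aᵀᴴ = A := by
      subst hA
      ext i j
      cases i <;> cases j <;> simp [conjTranspose_apply, Matrix.map_apply]
    rw [hM, conjTranspose_add, conjTranspose_smul, conjTranspose_smul, hAH, hATH]
    simp only [starRingEnd_apply, star_sub, star_one, star_star]
    exact add_comm _ _
  -- the involution D = diag(1,-1)
  set D : Matrix (Fin n ⊕ Fin n) (Fin n ⊕ Fin n) ℂ :=
    Matrix.fromBlocks 1 0 0 (-1) with hDdef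
  have hD : D * D = 1 := by
    rw [hDdef, Matrix.fromBlocks_multiply]
    simp [← Matrix.fromBlocks_one]
  have hDAD : D * A * D = -A := by
    subst hA
    rw [hDdef, Matrix.fromBlocks_map, Matrix.fromBlocks_multiply, Matrix.fromBlocks_multiply]
    simp [Matrix.fromBlocks_neg]
  have hDATD : D * Aᵀ * D = -Aᵀ := by
    subst hA
    rw [Matrix.fromBlocks_map, Matrix.fromBlocks_transpose, hDdef,
      Matrix.fromBlocks_multiply, Matrix.fromBlocks_multiply]
    simp [Matrix.fromBlocks_neg]
  have hDMD : D * M * D = -M := by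
    rw [hM]
    rw [Matrix.mul_add, Matrix.add_mul, Matrix.mul_smul, Matrix.smul_mul,
      Matrix.mul_smul, Matrix.smul_mul, hDAD, hDATD]
    simp [smul_neg]
    abel
  refine ⟨hHerm, ?_⟩
  have key := my_key M D hD hDMD hHerm
  -- counting
  set eig := hHerm.eigenvalues with heig
  have c1 : ∀ (p : ℝ → Prop) [DecidablePred p],
      (Finset.univ.filter fun i => p (eig i)).card
        = Multiset.countP p (Finset.univ.val.map eig) := by
    intro p _
    rw [Multiset.countP_map]
    rw [Finset.card_filter]
    simp [Multiset.countP_eq_card_filter, Finset.filter_val, Finset.card_def]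
  rw [c1 (fun x => 0 < x), c1 (fun x => x < 0)]
  conv_lhs => rw [key]
  rw [Multiset.countP_map, Multiset.countP_eq_card_filter]
  congr 1
  apply Multiset.filter_congr
  intro x _
  exact neg_pos
end

section
/- Let ζ be a primitive 7th root of unity generating the cyclotomic field ℚ(ζ₇). The polynomial t⁴ + (4 + ζ + ζ² + ζ⁴)·t³ + 3t² + (3 − ζ − ζ² − ζ⁴)·t + 1 is irreducible in the polynomial ring ℚ(ζ₇)[t]. -/
open Polynomial

section QuarticAux

lemma monic_quad_eq' {F : Type*} [Field F] {p : F[X]} (hm : p.Monic) (h : p.natDegree = 2) :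
    p = X ^ 2 + C (p.coeff 1) * X + C (p.coeff 0) := by
  ext n
  have h2 : p.coeff 2 = 1 := by have := hm.coeff_natDegree; rwa [h] at this
  match n with
  | 0 => simp
  | 1 => simp
  | 2 => simp [coeff_X_pow, h2]
  | (n+3) =>
    rw [coeff_eq_zero_of_natDegree_lt (by omega)]
    simp [coeff_X_pow, coeff_C]

lemma quad_mul_quad' {F : Type*} [Field F] (a b c d : F) :
    (X ^ 2 + C a * X + C b) * (X ^ 2 + C c * X + C d) =
      X ^ 4 + C (a + c) * X ^ 3 + C (b + d + a * c) * X ^ 2 + C (a * d + b * c) * X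
        + C (b * d) := by
  simp only [C_add, C_mul]; ring

lemma quartic_irreducible' {F : Type*} [Field F] (A B C' D : F)
    (h1 : ∀ x : F, x ^ 4 + A * x ^ 3 + B * x ^ 2 + C' * x + D ≠ 0)
    (h2 : ∀ a b c d : F, a + c = A → b + d + a * c = B → a * d + b * c = C' → b * d = D → False) :
    Irreducible (X ^ 4 + C A * X ^ 3 + C B * X ^ 2 + C C' * X + C D : F[X]) := by
  set g : F[X] := X ^ 4 + C A * X ^ 3 + C B * X ^ 2 + C C' * X + C D with hg
  have hgm : g.Monic := by unfold g; monicity!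
  have hgd : g.natDegree = 4 := by unfold g; compute_degree!
  have key : ∀ w : F[X], w.Monic → w ∣ g → w.natDegree = 1 ∨ w.natDegree = 2 → False := by
    rintro w hwm hwd (h1d | h2d)
    · have hw : w = X + C (w.coeff 0) := hwm.eq_X_add_C h1d
      have hroot : g.IsRoot (-(w.coeff 0)) := by
        rw [← dvd_iff_isRoot]
        rwa [map_neg, sub_neg_eq_add, ← hw]
      apply h1 (-(w.coeff 0))
      rw [hg] at hroot
      simpa [IsRoot] using hroot
    · obtain ⟨k, hk⟩ := hwd
      have hkm : k.Monic := by
        have : (w * k).Monic := hk ▸ hgm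
        exact hwm.of_mul_monic_left this
      have hkd : k.natDegree = 2 := by
        have := natDegree_mul hwm.ne_zero hkm.ne_zero
        rw [← hk, hgd, h2d] at this
        omega
      rw [monic_quad_eq' hwm h2d, monic_quad_eq' hkm hkd, quad_mul_quad', hg] at hk
      have e3 := congrArg (fun p => coeff p 3) hk
      have e2 := congrArg (fun p => coeff p 2) hk
      have e1 := congrArg (fun p => coeff p 1) hk
      have e0 := congrArg (fun p => coeff p 0) hk
      simp only [coeff_add, coeff_C_mul, coeff_X_pow, coeff_C, coeff_X] at e3 e2 e1 e0
      norm_num at e3 e2 e1 e0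
      exact h2 _ _ _ _ e3.symm e2.symm e1.symm e0.symm
  constructor
  · intro hu
    have := natDegree_eq_zero_of_isUnit hu
    omega
  · intro u v huv
    by_contra hcon
    push_neg at hcon
    obtain ⟨hu, hv⟩ := hcon
    have hu0 : u ≠ 0 := by rintro rfl; rw [zero_mul] at huv; exact hgm.ne_zero huv
    have hv0 : v ≠ 0 := by rintro rfl; rw [mul_zero] at huv; exact hgm.ne_zero huv
    have hdd : u.natDegree + v.natDegree = 4 := by
      rw [← natDegree_mul hu0 hv0, ← huv, hgd]
    have hu1 : u.natDegree ≠ 0 := by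
      intro h
      apply hu
      rw [eq_C_of_natDegree_eq_zero h]
      exact isUnit_C.2 (isUnit_iff_ne_zero.2 (fun h0 => hu0 (by
        rw [eq_C_of_natDegree_eq_zero h, h0, map_zero])))
    have hv1 : v.natDegree ≠ 0 := by
      intro h
      apply hv
      rw [eq_C_of_natDegree_eq_zero h]
      exact isUnit_C.2 (isUnit_iff_ne_zero.2 (fun h0 => hv0 (by
        rw [eq_C_of_natDegree_eq_zero h, h0, map_zero])))
    have main : ∀ u v : F[X], u ≠ 0 → v ≠ 0 → g = u * v → u.natDegree = 1 ∨ u.natDegree = 2 →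
        False := by
      intro u v hu0 hv0 huv hd
      have hl : u.leadingCoeff ≠ 0 := leadingCoeff_ne_zero.2 hu0
      refine key (u * C u.leadingCoeff⁻¹) (monic_mul_leadingCoeff_inv hu0)
        ⟨C u.leadingCoeff * v, ?_⟩ ?_
      · rw [huv, mul_assoc, ← mul_assoc (C _), ← C_mul, inv_mul_cancel₀ hl, C_1, one_mul]
      · rwa [natDegree_mul_leadingCoeff_inv u hu0]
    rcases (by omega : u.natDegree = 1 ∨ u.natDegree = 2 ∨ v.natDegree = 1) with h | h | h
    · exact main u v hu0 hv0 huv (Or.inl h)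
    · exact main u v hu0 hv0 huv (Or.inr h)
    · exact main v u hv0 hu0 (by rwa [mul_comm]) (Or.inl h)

lemma zmod43_key1 : ∀ x : ZMod 43, x ^ 4 + 22 * x ^ 3 + 3 * x ^ 2 + 28 * x + 1 ≠ 0 := by decide

lemma zmod43_key2 : ∀ a b : ZMod 43,
    a * (3 - a * (22 - a) - b) + b * (22 - a) = 28 → b * (3 - a * (22 - a) - b) = 1 → False := by
  decide

lemma aux280 : (4 + 4 + 4 ^ 2 + 4 ^ 4 : ZMod 43) = 22 := by decide

lemma aux273 : (3 - 4 - 4 ^ 2 - 4 ^ 4 : ZMod 43) = 28 := by decide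

lemma aux5461 : (5461 : ZMod 43) = 0 := by decide

lemma zmod43_irred :
    haveI : Fact (Nat.Prime 43) := ⟨by norm_num⟩
    Irreducible (X ^ 4 + C (22 : ZMod 43) * X ^ 3 + C 3 * X ^ 2 + C 28 * X + C 1) := by
  haveI : Fact (Nat.Prime 43) := ⟨by norm_num⟩
  apply quartic_irreducible'
  · exact zmod43_key1
  · intro a b c d e1 e2 e3 e4
    have hc : c = 22 - a := by linear_combination e1
    subst hc
    have hd : d = 3 - a * (22 - a) - b := by linear_combination e2
    subst hd
    exact zmod43_key2 a b e3 e4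

end QuarticAux

/-- For `ζ` a primitive 7th root of unity in `ℚ(ζ₇)`, the polynomial
`t⁴ + (4 + ζ + ζ² + ζ⁴)t³ + 3t² + (3 - ζ - ζ² - ζ⁴)t + 1` is irreducible
in `ℚ(ζ₇)[t]`. -/
theorem stmt_17 (ζ : CyclotomicField 7 ℚ) (hζ : IsPrimitiveRoot ζ 7) :
    Irreducible
      (X ^ 4 + C (4 + ζ + ζ ^ 2 + ζ ^ 4) * X ^ 3 + 3 * X ^ 2 +
        C (3 - ζ - ζ ^ 2 - ζ ^ 4) * X + 1 :
        Polynomial (CyclotomicField 7 ℚ)) := by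
  have hζ' : IsPrimitiveRoot ζ ((7:ℕ+):ℕ) := hζ
  haveI : Fact (Nat.Prime ((7:ℕ+):ℕ)) := ⟨by norm_num⟩
  haveI : Fact (Nat.Prime 7) := ⟨by norm_num⟩
  haveI : Fact (Nat.Prime 43) := ⟨by norm_num⟩
  haveI : NumberField (CyclotomicField 7 ℚ) := inferInstance
  set z : NumberField.RingOfIntegers (CyclotomicField 7 ℚ) := hζ'.toInteger with hz
  set F : (NumberField.RingOfIntegers (CyclotomicField 7 ℚ))[X] :=
      X ^ 4 + C (4 + z + z ^ 2 + z ^ 4) * X ^ 3 + 3 * X ^ 2 +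
      C (3 - z - z ^ 2 - z ^ 4) * X + 1 with hF
  have hFM : F.Monic := by unfold F; monicity!
  have hzmap : algebraMap (NumberField.RingOfIntegers (CyclotomicField 7 ℚ))
      (CyclotomicField 7 ℚ) z = ζ := rfl
  have hmapF : F.map (algebraMap (NumberField.RingOfIntegers (CyclotomicField 7 ℚ))
        (CyclotomicField 7 ℚ)) =
      X ^ 4 + C (4 + ζ + ζ ^ 2 + ζ ^ 4) * X ^ 3 + 3 * X ^ 2 +
        C (3 - ζ - ζ ^ 2 - ζ ^ 4) * X + 1 := by
    rw [hF]
    simp only [Polynomial.map_add, Polynomial.map_sub, Polynomial.map_mul, Polynomial.map_pow,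
      Polynomial.map_X, Polynomial.map_C, Polynomial.map_one, Polynomial.map_ofNat,
      map_add, map_sub, map_pow, map_ofNat, hzmap]
  rw [← hmapF]
  rw [← hFM.irreducible_iff_irreducible_map_fraction_map]
  -- now prove `Irreducible F` by reduction mod 43
  haveI : IsCyclotomicExtension {7} ℚ (CyclotomicField 7 ℚ) := CyclotomicField.isCyclotomicExtension 7 ℚ
  let pb := hζ.integralPowerBasis
  have hgen : pb.gen = z := hζ.integralPowerBasis_gen
  have hmin : minpoly ℤ pb.gen = cyclotomic 7 ℤ := by
    rw [hgen]
    have h2 : minpoly ℤ (algebraMap (NumberField.RingOfIntegers (CyclotomicField 7 ℚ))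
        (CyclotomicField 7 ℚ) z) = minpoly ℤ z :=
      minpoly.algebraMap_eq (NumberField.RingOfIntegers.coe_injective) z
    rw [← h2, hzmap]; exact (cyclotomic_eq_minpoly hζ (by norm_num)).symm
  have haev : aeval (4 : ZMod 43) (minpoly ℤ pb.gen) = 0 := by
    rw [hmin, cyclotomic_prime ℤ 7]
    simp [Finset.sum_range_succ]
    norm_num
    all_goals exact aux5461
  let φ : NumberField.RingOfIntegers (CyclotomicField 7 ℚ) →+* ZMod 43 :=
    (pb.lift (4 : ZMod 43) haev).toRingHom
  have hφz : φ z = 4 := by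
    show (pb.lift (4 : ZMod 43) haev) z = 4
    rw [← hgen, pb.lift_gen]
  refine Monic.irreducible_of_irreducible_map φ F hFM ?_
  have hmapφ : F.map φ = X ^ 4 + C (22 : ZMod 43) * X ^ 3 + C 3 * X ^ 2 + C 28 * X + C 1 := by
    rw [hF]
    simp only [Polynomial.map_add, Polynomial.map_sub, Polynomial.map_mul, Polynomial.map_pow,
      Polynomial.map_X, Polynomial.map_C, Polynomial.map_one, Polynomial.map_ofNat,
      map_add, map_sub, map_pow, map_ofNat, map_one, C_1, hφz]
    have e1 : ((4:(ZMod 43)[X]) + 4 + 4 ^ 2 + 4 ^ 4) = 22 := by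
      simpa only [map_add, map_pow, map_ofNat] using congrArg C aux280
    have e2 : ((3:(ZMod 43)[X]) - 4 - 4 ^ 2 - 4 ^ 4) = 28 := by
      simpa only [map_sub, map_pow, map_ofNat] using congrArg C aux273
    rw [e1, e2]
  rw [hmapφ]
  exact zmod43_irred
end

section
/- Let ζ be a primitive 7th root of unity generating the cyclotomic field ℚ(ζ₇), and set s = ζ + ζ² + ζ⁴. The polynomial −29t⁴ + (−27 + 37s)·t³ + (17 + 68s)·t² + (48 + 47s)·t + (31 + 8s) is irreducible in the polynomial ring ℚ(ζ₇)[t]. -/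
open Polynomial

namespace Stmt19Aux

private instance : Fact (Nat.Prime 13) := ⟨by norm_num⟩

/-! ### Generic helpers -/

private lemma rem_zero {F : Type*} [Field F] {g q Q R : F[X]}
    (h : g * q = g * Q + R) (hdR : R.degree < g.degree) : R = 0 := by
  have h2 : R = g * (q - Q) := by linear_combination -h
  by_cases hqQ : q - Q = 0
  · simpa [hqQ] using h2
  · exfalso
    have hg : g.degree ≤ (g * (q - Q)).degree := degree_le_mul_left g hqQ
    rw [← h2] at hg
    exact absurd hg (not_le.mpr hdR)

private lemma rz1 {F : Type*} [CommRing F] {w0 : F} (h : C w0 = 0) : w0 = 0 := by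
  have := congrArg (fun p => coeff p 0) h
  simpa using this

private lemma rz2 {F : Type*} [CommRing F] {w0 w1 : F} (h : C w1 * X + C w0 = 0) :
    w0 = 0 ∧ w1 = 0 := by
  constructor
  · have := congrArg (fun p => coeff p 0) h; simpa using this
  · have := congrArg (fun p => coeff p 1) h; simpa using this

private lemma rz3 {F : Type*} [CommRing F] {w0 w1 w2 : F}
    (h : C w2 * X^2 + C w1 * X + C w0 = 0) : w0 = 0 ∧ w1 = 0 ∧ w2 = 0 := by
  refine ⟨?_, ?_, ?_⟩
  · have := congrArg (fun p => coeff p 0) h; simpa using this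
  · have := congrArg (fun p => coeff p 1) h; simpa [coeff_X_pow] using this
  · have := congrArg (fun p => coeff p 2) h; simpa [coeff_X_pow] using this

private lemma rz4 {F : Type*} [CommRing F] {w0 w1 w2 w3 : F}
    (h : C w3 * X^3 + C w2 * X^2 + C w1 * X + C w0 = 0) :
    w0 = 0 ∧ w1 = 0 ∧ w2 = 0 ∧ w3 = 0 := by
  refine ⟨?_, ?_, ?_, ?_⟩
  · have := congrArg (fun p => coeff p 0) h; simpa using this
  · have := congrArg (fun p => coeff p 1) h; simpa [coeff_X_pow] using this
  · have := congrArg (fun p => coeff p 2) h; simpa [coeff_X_pow] using this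
  · have := congrArg (fun p => coeff p 3) h; simpa [coeff_X_pow] using this

/-- shape of a monic polynomial of given small degree -/
private lemma monic_shape_1 {F : Type*} [Field F] {p : F[X]} (hm : p.Monic)
    (hd : p.natDegree = 1) : p = X + C (p.coeff 0) := by
  have h1 : p.coeff 1 = 1 := by rw [← hd]; exact hm.coeff_natDegree
  conv_lhs => rw [p.as_sum_range' 2 (by omega)]
  simp [Finset.sum_range_succ, ← C_mul_X_pow_eq_monomial, h1]
  ring

private lemma monic_shape_2 {F : Type*} [Field F] {p : F[X]} (hm : p.Monic)
    (hd : p.natDegree = 2) : p = X^2 + C (p.coeff 1) * X + C (p.coeff 0) := by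
  have h1 : p.coeff 2 = 1 := by rw [← hd]; exact hm.coeff_natDegree
  conv_lhs => rw [p.as_sum_range' 3 (by omega)]
  simp [Finset.sum_range_succ, ← C_mul_X_pow_eq_monomial, h1]
  ring

private lemma monic_shape_3 {F : Type*} [Field F] {p : F[X]} (hm : p.Monic)
    (hd : p.natDegree = 3) :
    p = X^3 + C (p.coeff 2) * X^2 + C (p.coeff 1) * X + C (p.coeff 0) := by
  have h1 : p.coeff 3 = 1 := by rw [← hd]; exact hm.coeff_natDegree
  conv_lhs => rw [p.as_sum_range' 4 (by omega)]
  simp [Finset.sum_range_succ, ← C_mul_X_pow_eq_monomial, h1]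
  ring

private lemma monic_shape_4 {F : Type*} [Field F] {p : F[X]} (hm : p.Monic)
    (hd : p.natDegree = 4) :
    p = X^4 + C (p.coeff 3) * X^3 + C (p.coeff 2) * X^2 + C (p.coeff 1) * X + C (p.coeff 0) := by
  have h1 : p.coeff 4 = 1 := by rw [← hd]; exact hm.coeff_natDegree
  conv_lhs => rw [p.as_sum_range' 5 (by omega)]
  simp [Finset.sum_range_succ, ← C_mul_X_pow_eq_monomial, h1]
  ring

private lemma monic_div {F : Type*} [Field F] {D N : F[X]} (hD : D ≠ 0) (h : D ∣ N) :
    ∃ m : F[X], m.Monic ∧ m.natDegree = D.natDegree ∧ m ∣ N := by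
  have hlc : D.leadingCoeff ≠ 0 := leadingCoeff_ne_zero.mpr hD
  have hinv : D.leadingCoeff⁻¹ ≠ 0 := inv_ne_zero hlc
  refine ⟨D * C D.leadingCoeff⁻¹, monic_mul_leadingCoeff_inv hD, ?_, ?_⟩
  · rw [natDegree_mul hD (by simpa using hinv), natDegree_C, add_zero]
  · refine dvd_trans ⟨C D.leadingCoeff, ?_⟩ h
    rw [mul_assoc, ← C_mul, inv_mul_cancel₀ hlc, C_1, mul_one]

/-! ### The integer polynomial `N₀` and its reductions -/

private noncomputable def NZ : ℤ[X] :=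
  C 29 * X^8 + C 91 * X^7 + C 188 * X^6 + C 308 * X^5 + C 368 * X^4 +
    C 308 * X^3 + C 188 * X^2 + C 91 * X + C 29

private noncomputable def N3 : (ZMod 3)[X] :=
  C 29 * X^8 + C 91 * X^7 + C 188 * X^6 + C 308 * X^5 + C 368 * X^4 +
    C 308 * X^3 + C 188 * X^2 + C 91 * X + C 29

private noncomputable def N13 : (ZMod 13)[X] :=
  C 29 * X^8 + C 91 * X^7 + C 188 * X^6 + C 308 * X^5 + C 368 * X^4 +
    C 308 * X^3 + C 188 * X^2 + C 91 * X + C 29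

private lemma NZ_map3 : NZ.map (Int.castRingHom (ZMod 3)) = N3 := by
  simp [NZ, N3, Polynomial.map_add, Polynomial.map_mul, Polynomial.map_pow,
    Polynomial.map_C, Polynomial.map_X, Int.cast_ofNat, map_ofNat]

private lemma NZ_map13 : NZ.map (Int.castRingHom (ZMod 13)) = N13 := by
  simp [NZ, N13, Polynomial.map_add, Polynomial.map_mul, Polynomial.map_pow,
    Polynomial.map_C, Polynomial.map_X, Int.cast_ofNat, map_ofNat]

private lemma NZ_natDegree : NZ.natDegree = 8 := by unfold NZ; compute_degree!

private lemma NZ_coeff8 : NZ.coeff 8 = 29 := by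
  unfold NZ; simp [coeff_X_pow, coeff_C, coeff_X]

private lemma NZ_coeff7 : NZ.coeff 7 = 91 := by
  unfold NZ; simp [coeff_X_pow, coeff_C, coeff_X]

private lemma NZ_lead : NZ.leadingCoeff = 29 := by
  rw [Polynomial.leadingCoeff, NZ_natDegree, NZ_coeff8]

private lemma NZ_ne_zero : NZ ≠ 0 := fun h => by
  have := NZ_lead; rw [h] at this; simp at this

private lemma unit_of_dvd_29_91 {r : ℤ} (h29 : r ∣ 29) (h91 : r ∣ 91) : IsUnit r := by
  have h4 : r ∣ 4 := (show (4:ℤ) = 91 - 3 * 29 by norm_num) ▸ dvd_sub h91 (h29.mul_left 3)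
  have h1 : r ∣ 1 := (show (1:ℤ) = 29 - 7 * 4 by norm_num) ▸ dvd_sub h29 (h4.mul_left 7)
  exact isUnit_of_dvd_one h1
set_option maxRecDepth 100000 in
set_option maxHeartbeats 6000000 in
private lemma dec_3_1 : ∀ a : ZMod 3, ¬((29 + (-91)*a + 188*a^2 + (-308)*a^3 + 368*a^4 + (-308)*a^5 + 188*a^6 + (-91)*a^7 + 29*a^8) = 0) := by decide

set_option maxHeartbeats 2000000 in
private lemma nodiv_3_1 (a : ZMod 3) : ¬ (X + C a ∣ N3) := by
  rintro ⟨q, hq⟩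
  have key : (X + C a) * q = (X + C a) * ((29)*X^7 + (91 + (-29)*C a)*X^6 + (188 + (-91)*C a + 29*C a^2)*X^5 + (308 + (-188)*C a + 91*C a^2 + (-29)*C a^3)*X^4 + (368 + (-308)*C a + 188*C a^2 + (-91)*C a^3 + 29*C a^4)*X^3 + (308 + (-368)*C a + 308*C a^2 + (-188)*C a^3 + 91*C a^4 + (-29)*C a^5)*X^2 + (188 + (-308)*C a + 368*C a^2 + (-308)*C a^3 + 188*C a^4 + (-91)*C a^5 + 29*C a^6)*X + (91 + (-188)*C a + 308*C a^2 + (-368)*C a^3 + 308*C a^4 + (-188)*C a^5 + 91*C a^6 + (-29)*C a^7)) + (C (29 + (-91)*a + 188*a^2 + (-308)*a^3 + 368*a^4 + (-308)*a^5 + 188*a^6 + (-91)*a^7 + 29*a^8)) := by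
    rw [← hq]
    unfold N3
    simp only [map_add, map_mul, map_pow, map_neg, map_ofNat, map_one, map_zero]
    ring
  have hdR : degree ((C (29 + (-91)*a + 188*a^2 + (-308)*a^3 + 368*a^4 + (-308)*a^5 + 188*a^6 + (-91)*a^7 + 29*a^8)) : (ZMod 3)[X]) < degree ((X + C a) : (ZMod 3)[X]) := by
    have h1 : degree ((C (29 + (-91)*a + 188*a^2 + (-308)*a^3 + 368*a^4 + (-308)*a^5 + 188*a^6 + (-91)*a^7 + 29*a^8)) : (ZMod 3)[X]) ≤ 0 := by compute_degree
    have h2 : degree ((X + C a) : (ZMod 3)[X]) = 1 := by compute_degree!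
    rw [h2]
    exact lt_of_le_of_lt h1 (by norm_num)
  have hR := rem_zero key hdR
  exact dec_3_1 a (rz1 hR)

set_option maxRecDepth 100000 in
set_option maxHeartbeats 6000000 in
private lemma dec_3_2 : ∀ a b : ZMod 3, ¬((29 + (-188)*b + 368*b^2 + (-188)*b^3 + 29*b^4 + 308*a*b + (-616)*a*b^2 + 273*a*b^3 + (-368)*a^2*b + 564*a^2*b^2 + (-174)*a^2*b^3 + 308*a^3*b + (-364)*a^3*b^2 + (-188)*a^4*b + 145*a^4*b^2 + 91*a^5*b + (-29)*a^6*b) = 0 ∧ (91 + (-308)*b + 308*b^2 + (-91)*b^3 + (-188)*a + 736*a*b + (-564)*a*b^2 + 116*a*b^3 + 308*a^2 + (-924)*a^2*b + 546*a^2*b^2 + (-368)*a^3 + 752*a^3*b + (-290)*a^3*b^2 + 308*a^4 + (-455)*a^4*b + (-188)*a^5 + 174*a^5*b + 91*a^6 + (-29)*a^7) = 0) := by decide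

set_option maxHeartbeats 2000000 in
private lemma nodiv_3_2 (a b : ZMod 3) : ¬ (X^2 + C a * X + C b ∣ N3) := by
  rintro ⟨q, hq⟩
  have key : (X^2 + C a * X + C b) * q = (X^2 + C a * X + C b) * ((29)*X^6 + (91 + (-29)*C a)*X^5 + (188 + (-29)*C b + (-91)*C a + 29*C a^2)*X^4 + (308 + (-91)*C b + (-188)*C a + 58*C a*C b + 91*C a^2 + (-29)*C a^3)*X^3 + (368 + (-188)*C b + 29*C b^2 + (-308)*C a + 182*C a*C b + 188*C a^2 + (-87)*C a^2*C b + (-91)*C a^3 + 29*C a^4)*X^2 + (308 + (-308)*C b + 91*C b^2 + (-368)*C a + 376*C a*C b + (-87)*C a*C b^2 + 308*C a^2 + (-273)*C a^2*C b + (-188)*C a^3 + 116*C a^3*C b + 91*C a^4 + (-29)*C a^5)*X + (188 + (-368)*C b + 188*C b^2 + (-29)*C b^3 + (-308)*C a + 616*C a*C b + (-273)*C a*C b^2 + 368*C a^2 + (-564)*C a^2*C b + 174*C a^2*C b^2 + (-308)*C a^3 + 364*C a^3*C b + 188*C a^4 + (-145)*C a^4*C b + (-91)*C a^5 + 29*C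 a^6)) + (C (91 + (-308)*b + 308*b^2 + (-91)*b^3 + (-188)*a + 736*a*b + (-564)*a*b^2 + 116*a*b^3 + 308*a^2 + (-924)*a^2*b + 546*a^2*b^2 + (-368)*a^3 + 752*a^3*b + (-290)*a^3*b^2 + 308*a^4 + (-455)*a^4*b + (-188)*a^5 + 174*a^5*b + 91*a^6 + (-29)*a^7) * X + C (29 + (-188)*b + 368*b^2 + (-188)*b^3 + 29*b^4 + 308*a*b + (-616)*a*b^2 + 273*a*b^3 + (-368)*a^2*b + 564*a^2*b^2 + (-174)*a^2*b^3 + 308*a^3*b + (-364)*a^3*b^2 + (-188)*a^4*b + 145*a^4*b^2 + 91*a^5*b + (-29)*a^6*b)) := by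
    rw [← hq]
    unfold N3
    simp only [map_add, map_mul, map_pow, map_neg, map_ofNat, map_one, map_zero]
    ring
  have hdR : degree ((C (91 + (-308)*b + 308*b^2 + (-91)*b^3 + (-188)*a + 736*a*b + (-564)*a*b^2 + 116*a*b^3 + 308*a^2 + (-924)*a^2*b + 546*a^2*b^2 + (-368)*a^3 + 752*a^3*b + (-290)*a^3*b^2 + 308*a^4 + (-455)*a^4*b + (-188)*a^5 + 174*a^5*b + 91*a^6 + (-29)*a^7) * X + C (29 + (-188)*b + 368*b^2 + (-188)*b^3 + 29*b^4 + 308*a*b + (-616)*a*b^2 + 273*a*b^3 + (-368)*a^2*b + 564*a^2*b^2 + (-174)*a^2*b^3 + 308*a^3*b + (-364)*a^3*b^2 + (-188)*a^4*b + 145*a^4*b^2 + 91*a^5*b + (-29)*a^6*b)) : (ZMod 3)[X]) < degree ((X^2 + C a * X + C b) : (ZMod 3)[X]) := by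
    have h1 : degree ((C (91 + (-308)*b + 308*b^2 + (-91)*b^3 + (-188)*a + 736*a*b + (-564)*a*b^2 + 116*a*b^3 + 308*a^2 + (-924)*a^2*b + 546*a^2*b^2 + (-368)*a^3 + 752*a^3*b + (-290)*a^3*b^2 + 308*a^4 + (-455)*a^4*b + (-188)*a^5 + 174*a^5*b + 91*a^6 + (-29)*a^7) * X + C (29 + (-188)*b + 368*b^2 + (-188)*b^3 + 29*b^4 + 308*a*b + (-616)*a*b^2 + 273*a*b^3 + (-368)*a^2*b + 564*a^2*b^2 + (-174)*a^2*b^3 + 308*a^3*b + (-364)*a^3*b^2 + (-188)*a^4*b + 145*a^4*b^2 + 91*a^5*b + (-29)*a^6*b)) : (ZMod 3)[X]) ≤ 1 := by compute_degree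
    have h2 : degree ((X^2 + C a * X + C b) : (ZMod 3)[X]) = 2 := by compute_degree!
    rw [h2]
    exact lt_of_le_of_lt h1 (by norm_num)
  have hR := rem_zero key hdR
  exact dec_3_2 a b (rz2 hR)

set_option maxRecDepth 100000 in
set_option maxHeartbeats 6000000 in
private lemma dec_3_3 : ∀ a b c : ZMod 3, ¬((29 + (-308)*c + 188*c^2 + 308*b*c + (-58)*b*c^2 + (-91)*b^2*c + 368*a*c + (-182)*a*c^2 + (-376)*a*b*c + 87*a*b^2*c + (-308)*a^2*c + 87*a^2*c^2 + 273*a^2*b*c + 188*a^3*c + (-116)*a^3*b*c + (-91)*a^4*c + 29*a^5*c) = 0 ∧ (91 + (-368)*c + 91*c^2 + (-308)*b + 376*b*c + 308*b^2 + (-87)*b^2*c + (-91)*b^3 + 308*a*c + (-58)*a*c^2 + 368*a*b + (-364)*a*b*c + (-376)*a*b^2 + 87*a*b^3 + (-188)*a^2*c + (-308)*a^2*b + 174*a^2*b*c + 273*a^2*b^2 + 91*a^3*c + 188*a^3*b + (-116)*a^3*b^2 + (-29)*a^4*c + (-91)*a^4*b + 29*a^5*b) = 0 ∧ (188 + (-308)*c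 + 29*c^2 + (-368)*b + 182*b*c + 188*b^2 + (-29)*b^3 + (-308)*a + 376*a*c + 616*a*b + (-174)*a*b*c + (-273)*a*b^2 + 368*a^2 + (-273)*a^2*c + (-564)*a^2*b + 174*a^2*b^2 + (-308)*a^3 + 116*a^3*c + 364*a^3*b + 188*a^4 + (-145)*a^4*b + (-91)*a^5 + 29*a^6) = 0) := by decide

set_option maxHeartbeats 2000000 in
private lemma nodiv_3_3 (a b c : ZMod 3) : ¬ (X^3 + C a * X^2 + C b * X + C c ∣ N3) := by
  rintro ⟨q, hq⟩
  have key : (X^3 + C a * X^2 + C b * X + C c) * q = (X^3 + C a * X^2 + C b * X + C c) * ((29)*X^5 + (91 + (-29)*C a)*X^4 + (188 + (-29)*C b + (-91)*C a + 29*C a^2)*X^3 + (308 + (-29)*C c + (-91)*C b + (-188)*C a + 58*C a*C b + 91*C a^2 + (-29)*C a^3)*X^2 + (368 + (-91)*C c + (-188)*C b + 29*C b^2 + (-308)*C a + 58*C a*C c + 182*C a*C b + 188*C a^2 + (-87)*C a^2*C b + (-91)*C a^3 + 29*C a^4)*X + (308 + (-188)*C c + (-308)*C b + 58*C b*C c +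 91*C b^2 + (-368)*C a + 182*C a*C c + 376*C a*C b + (-87)*C a*C b^2 + 308*C a^2 + (-87)*C a^2*C c + (-273)*C a^2*C b + (-188)*C a^3 + 116*C a^3*C b + 91*C a^4 + (-29)*C a^5)) + (C (188 + (-308)*c + 29*c^2 + (-368)*b + 182*b*c + 188*b^2 + (-29)*b^3 + (-308)*a + 376*a*c + 616*a*b + (-174)*a*b*c + (-273)*a*b^2 + 368*a^2 + (-273)*a^2*c + (-564)*a^2*b + 174*a^2*b^2 + (-308)*a^3 + 116*a^3*c + 364*a^3*b + 188*a^4 + (-145)*a^4*b + (-91)*a^5 + 29*a^6) * X^2 + C (91 + (-368)*c + 91*c^2 + (-308)*b + 376*b*c + 308*b^2 + (-87)*b^2*c + (-91)*b^3 + 308*a*c + (-58)*a*c^2 + 368*a*b + (-364)*a*b*c + (-376)*a*b^2 + 87*a*b^3 + (-188)*a^2*c + (-308)*a^2*b + 174*a^2*b*c + 273*a^2*b^2 + 91*a^3*c + 188*a^3*b + (-116)*a^3*b^2 + (-29)*a^4*c + (-91)*a^4*b + 29*a^5*b) * X + C (29 + (-308)*c + 188*c^2 + 308*b*c + (-58)*b*c^2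 + (-91)*b^2*c + 368*a*c + (-182)*a*c^2 + (-376)*a*b*c + 87*a*b^2*c + (-308)*a^2*c + 87*a^2*c^2 + 273*a^2*b*c + 188*a^3*c + (-116)*a^3*b*c + (-91)*a^4*c + 29*a^5*c)) := by
    rw [← hq]
    unfold N3
    simp only [map_add, map_mul, map_pow, map_neg, map_ofNat, map_one, map_zero]
    ring
  have hdR : degree ((C (188 + (-308)*c + 29*c^2 + (-368)*b + 182*b*c + 188*b^2 + (-29)*b^3 + (-308)*a + 376*a*c + 616*a*b + (-174)*a*b*c + (-273)*a*b^2 + 368*a^2 + (-273)*a^2*c + (-564)*a^2*b + 174*a^2*b^2 + (-308)*a^3 + 116*a^3*c + 364*a^3*b + 188*a^4 + (-145)*a^4*b + (-91)*a^5 + 29*a^6) * X^2 + C (91 + (-368)*c + 91*c^2 + (-308)*b + 376*b*c + 308*b^2 + (-87)*b^2*c + (-91)*b^3 + 308*a*c + (-58)*a*c^2 + 368*a*b + (-364)*a*b*c + (-376)*a*b^2 + 87*a*b^3 + (-188)*a^2*c + (-308)*a^2*b + 174*a^2*b*c + 273*a^2*b^2 + 91*a^3*c + 188*a^3*b + (-116)*a^3*b^2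 + (-29)*a^4*c + (-91)*a^4*b + 29*a^5*b) * X + C (29 + (-308)*c + 188*c^2 + 308*b*c + (-58)*b*c^2 + (-91)*b^2*c + 368*a*c + (-182)*a*c^2 + (-376)*a*b*c + 87*a*b^2*c + (-308)*a^2*c + 87*a^2*c^2 + 273*a^2*b*c + 188*a^3*c + (-116)*a^3*b*c + (-91)*a^4*c + 29*a^5*c)) : (ZMod 3)[X]) < degree ((X^3 + C a * X^2 + C b * X + C c) : (ZMod 3)[X]) := by
    have h1 : degree ((C (188 + (-308)*c + 29*c^2 + (-368)*b + 182*b*c + 188*b^2 + (-29)*b^3 + (-308)*a + 376*a*c + 616*a*b + (-174)*a*b*c + (-273)*a*b^2 + 368*a^2 + (-273)*a^2*c + (-564)*a^2*b + 174*a^2*b^2 + (-308)*a^3 + 116*a^3*c + 364*a^3*b + 188*a^4 + (-145)*a^4*b + (-91)*a^5 + 29*a^6) * X^2 + C (91 + (-368)*c + 91*c^2 + (-308)*b + 376*b*c + 308*b^2 + (-87)*b^2*c + (-91)*b^3 + 308*a*c + (-58)*a*c^2 + 368*a*b + (-364)*a*b*c + (-376)*a*b^2 + 87*a*b^3 + (-188)*a^2*c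 + (-308)*a^2*b + 174*a^2*b*c + 273*a^2*b^2 + 91*a^3*c + 188*a^3*b + (-116)*a^3*b^2 + (-29)*a^4*c + (-91)*a^4*b + 29*a^5*b) * X + C (29 + (-308)*c + 188*c^2 + 308*b*c + (-58)*b*c^2 + (-91)*b^2*c + 368*a*c + (-182)*a*c^2 + (-376)*a*b*c + 87*a*b^2*c + (-308)*a^2*c + 87*a^2*c^2 + 273*a^2*b*c + 188*a^3*c + (-116)*a^3*b*c + (-91)*a^4*c + 29*a^5*c)) : (ZMod 3)[X]) ≤ 2 := by compute_degree
    have h2 : degree ((X^3 + C a * X^2 + C b * X + C c) : (ZMod 3)[X]) = 3 := by compute_degree!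
    rw [h2]
    exact lt_of_le_of_lt h1 (by norm_num)
  have hR := rem_zero key hdR
  exact dec_3_3 a b c (rz3 hR)

set_option maxRecDepth 100000 in
set_option maxHeartbeats 6000000 in
private lemma dec_13_4 : ∀ a b c d : ZMod 13, ¬((29 + (-368)*d + 29*d^2 + 91*c*d + 188*b*d + (-29)*b^2*d + 308*a*d + (-58)*a*c*d + (-182)*a*b*d + (-188)*a^2*d + 87*a^2*b*d + 91*a^3*d + (-29)*a^4*d) = 0 ∧ (91 + (-308)*d + (-368)*c + 58*c*d + 91*c^2 + 91*b*d + 188*b*c + (-29)*b^2*c + 188*a*d + 308*a*c + (-58)*a*c^2 + (-58)*a*b*d + (-182)*a*b*c + (-91)*a^2*d + (-188)*a^2*c + 87*a^2*b*c + 29*a^3*d + 91*a^3*c + (-29)*a^4*c) = 0 ∧ (188 + (-188)*d + (-308)*c + 29*c^2 + (-368)*b + 58*b*d + 182*b*c + 188*b^2 + (-29)*b^3 + 91*a*d + 188*a*c + 308*a*b + (-116)*a*b*c + (-182)*a*b^2 + (-29)*a^2*d + (-91)*a^2*c + (-188)*a^2*b + 87*a^2*b^2 + 29*a^3*c + 91*a^3*b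 + (-29)*a^4*b) = 0 ∧ (308 + (-91)*d + (-188)*c + (-308)*b + 58*b*c + 91*b^2 + (-368)*a + 58*a*d + 182*a*c + 376*a*b + (-87)*a*b^2 + 308*a^2 + (-87)*a^2*c + (-273)*a^2*b + (-188)*a^3 + 116*a^3*b + 91*a^4 + (-29)*a^5) = 0) := by decide

set_option maxHeartbeats 16000000 in
private lemma nodiv_13_4 (a b c d : ZMod 13) : ¬ (X^4 + C a * X^3 + C b * X^2 + C c * X + C d ∣ N13) := by
  rintro ⟨q, hq⟩
  have key : (X^4 + C a * X^3 + C b * X^2 + C c * X + C d) * q = (X^4 + C a * X^3 + C b * X^2 + C c * X + C d) * ((29)*X^4 + (91 + (-29)*C a)*X^3 + (188 + (-29)*C b + (-91)*C a + 29*C a^2)*X^2 + (308 + (-29)*C c + (-91)*C b + (-188)*C a + 58*C a*C b + 91*C a^2 + (-29)*C a^3)*X + (368 + (-29)*C d + (-91)*C c + (-188)*C b + 29*C b^2 + (-308)*C a + 58*C a*C c + 182*C a*C b + 188*C a^2 + (-87)*C a^2*C b + (-91)*C a^3 + 29*C a^4)) + (C (308 + (-91)*d + (-188)*c + (-308)*b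 + 58*b*c + 91*b^2 + (-368)*a + 58*a*d + 182*a*c + 376*a*b + (-87)*a*b^2 + 308*a^2 + (-87)*a^2*c + (-273)*a^2*b + (-188)*a^3 + 116*a^3*b + 91*a^4 + (-29)*a^5) * X^3 + C (188 + (-188)*d + (-308)*c + 29*c^2 + (-368)*b + 58*b*d + 182*b*c + 188*b^2 + (-29)*b^3 + 91*a*d + 188*a*c + 308*a*b + (-116)*a*b*c + (-182)*a*b^2 + (-29)*a^2*d + (-91)*a^2*c + (-188)*a^2*b + 87*a^2*b^2 + 29*a^3*c + 91*a^3*b + (-29)*a^4*b) * X^2 + C (91 + (-308)*d + (-368)*c + 58*c*d + 91*c^2 + 91*b*d + 188*b*c + (-29)*b^2*c + 188*a*d + 308*a*c + (-58)*a*c^2 + (-58)*a*b*d + (-182)*a*b*c + (-91)*a^2*d + (-188)*a^2*c + 87*a^2*b*c + 29*a^3*d + 91*a^3*c + (-29)*a^4*c) * X + C (29 + (-368)*d + 29*d^2 + 91*c*d + 188*b*d + (-29)*b^2*d + 308*a*d + (-58)*a*c*d + (-182)*a*b*d + (-188)*a^2*d + 87*a^2*b*d + 91*a^3*d + (-29)*a^4*d))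 := by
    rw [← hq]
    unfold N13
    simp only [map_add, map_mul, map_pow, map_neg, map_ofNat, map_one, map_zero]
    ring
  have hdR : degree ((C (308 + (-91)*d + (-188)*c + (-308)*b + 58*b*c + 91*b^2 + (-368)*a + 58*a*d + 182*a*c + 376*a*b + (-87)*a*b^2 + 308*a^2 + (-87)*a^2*c + (-273)*a^2*b + (-188)*a^3 + 116*a^3*b + 91*a^4 + (-29)*a^5) * X^3 + C (188 + (-188)*d + (-308)*c + 29*c^2 + (-368)*b + 58*b*d + 182*b*c + 188*b^2 + (-29)*b^3 + 91*a*d + 188*a*c + 308*a*b + (-116)*a*b*c + (-182)*a*b^2 + (-29)*a^2*d + (-91)*a^2*c + (-188)*a^2*b + 87*a^2*b^2 + 29*a^3*c + 91*a^3*b + (-29)*a^4*b) * X^2 + C (91 + (-308)*d + (-368)*c + 58*c*d + 91*c^2 + 91*b*d + 188*b*c + (-29)*b^2*c + 188*a*d + 308*a*c + (-58)*a*c^2 + (-58)*a*b*d + (-182)*a*b*c + (-91)*a^2*d + (-188)*a^2*c + 87*a^2*b*c + 29*a^3*d + 91*a^3*c + (-29)*a^4*c) * X + C (29 + (-368)*d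 + 29*d^2 + 91*c*d + 188*b*d + (-29)*b^2*d + 308*a*d + (-58)*a*c*d + (-182)*a*b*d + (-188)*a^2*d + 87*a^2*b*d + 91*a^3*d + (-29)*a^4*d)) : (ZMod 13)[X]) < degree ((X^4 + C a * X^3 + C b * X^2 + C c * X + C d) : (ZMod 13)[X]) := by
    have h1 : degree ((C (308 + (-91)*d + (-188)*c + (-308)*b + 58*b*c + 91*b^2 + (-368)*a + 58*a*d + 182*a*c + 376*a*b + (-87)*a*b^2 + 308*a^2 + (-87)*a^2*c + (-273)*a^2*b + (-188)*a^3 + 116*a^3*b + 91*a^4 + (-29)*a^5) * X^3 + C (188 + (-188)*d + (-308)*c + 29*c^2 + (-368)*b + 58*b*d + 182*b*c + 188*b^2 + (-29)*b^3 + 91*a*d + 188*a*c + 308*a*b + (-116)*a*b*c + (-182)*a*b^2 + (-29)*a^2*d + (-91)*a^2*c + (-188)*a^2*b + 87*a^2*b^2 + 29*a^3*c + 91*a^3*b + (-29)*a^4*b) * X^2 + C (91 + (-308)*d + (-368)*c + 58*c*d + 91*c^2 + 91*b*d + 188*b*c + (-29)*b^2*c + 188*a*d + 308*a*c + (-58)*a*c^2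 + (-58)*a*b*d + (-182)*a*b*c + (-91)*a^2*d + (-188)*a^2*c + 87*a^2*b*c + 29*a^3*d + 91*a^3*c + (-29)*a^4*c) * X + C (29 + (-368)*d + 29*d^2 + 91*c*d + 188*b*d + (-29)*b^2*d + 308*a*d + (-58)*a*c*d + (-182)*a*b*d + (-188)*a^2*d + 87*a^2*b*d + 91*a^3*d + (-29)*a^4*d)) : (ZMod 13)[X]) ≤ 3 := by compute_degree
    have h2 : degree ((X^4 + C a * X^3 + C b * X^2 + C c * X + C d) : (ZMod 13)[X]) = 4 := by compute_degree!
    rw [h2]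
    exact lt_of_le_of_lt h1 (by norm_num)
  have hR := rem_zero key hdR
  exact dec_13_4 a b c d (rz4 hR)

/-! ### Degree exclusions -/

private lemma lc_red {p : ℕ} [NeZero p] (hp : ¬ ((p:ℤ) ∣ 29)) {P Q : ℤ[X]}
    (hlc : P.leadingCoeff * Q.leadingCoeff = 29) :
    (Int.castRingHom (ZMod p)) P.leadingCoeff ≠ 0 := by
  intro h0
  have hd : (p:ℤ) ∣ P.leadingCoeff := (ZMod.intCast_zmod_eq_zero_iff_dvd _ p).mp h0
  exact hp (hlc ▸ hd.mul_right Q.leadingCoeff)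

private lemma excl_mod3 (P Q : ℤ[X]) (h : NZ = P * Q)
    (hlc : P.leadingCoeff * Q.leadingCoeff = 29) :
    P.natDegree ≠ 1 ∧ P.natDegree ≠ 2 ∧ P.natDegree ≠ 3 := by
  have hPlc : (Int.castRingHom (ZMod 3)) P.leadingCoeff ≠ 0 :=
    lc_red (by norm_num) hlc
  have hdegmap : (P.map (Int.castRingHom (ZMod 3))).natDegree = P.natDegree :=
    natDegree_map_of_leadingCoeff_ne_zero _ hPlc
  have hdvd : P.map (Int.castRingHom (ZMod 3)) ∣ N3 := by
    rw [← NZ_map3]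
    exact Polynomial.map_dvd _ ⟨Q, h⟩
  have hPm0 : P.map (Int.castRingHom (ZMod 3)) ≠ 0 := by
    refine leadingCoeff_ne_zero.mp ?_
    rwa [Polynomial.leadingCoeff_map_of_leadingCoeff_ne_zero _ hPlc]
  obtain ⟨m, hm, hmdeg, hmdvd⟩ := monic_div hPm0 hdvd
  rw [hdegmap] at hmdeg
  refine ⟨?_, ?_, ?_⟩ <;> intro hdeg <;> rw [hdeg] at hmdeg
  · exact nodiv_3_1 (m.coeff 0) (by rw [← monic_shape_1 hm hmdeg]; exact hmdvd)
  · exact nodiv_3_2 (m.coeff 1) (m.coeff 0) (by rw [← monic_shape_2 hm hmdeg]; exact hmdvd)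
  · exact nodiv_3_3 (m.coeff 2) (m.coeff 1) (m.coeff 0)
      (by rw [← monic_shape_3 hm hmdeg]; exact hmdvd)

private lemma excl_mod13 (P Q : ℤ[X]) (h : NZ = P * Q)
    (hlc : P.leadingCoeff * Q.leadingCoeff = 29) :
    P.natDegree ≠ 4 := by
  have hPlc : (Int.castRingHom (ZMod 13)) P.leadingCoeff ≠ 0 :=
    lc_red (by norm_num) hlc
  have hdegmap : (P.map (Int.castRingHom (ZMod 13))).natDegree = P.natDegree :=
    natDegree_map_of_leadingCoeff_ne_zero _ hPlc
  have hdvd : P.map (Int.castRingHom (ZMod 13)) ∣ N13 := by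
    rw [← NZ_map13]
    exact Polynomial.map_dvd _ ⟨Q, h⟩
  have hPm0 : P.map (Int.castRingHom (ZMod 13)) ≠ 0 := by
    refine leadingCoeff_ne_zero.mp ?_
    rwa [Polynomial.leadingCoeff_map_of_leadingCoeff_ne_zero _ hPlc]
  obtain ⟨m, hm, hmdeg, hmdvd⟩ := monic_div hPm0 hdvd
  rw [hdegmap] at hmdeg
  intro hdeg
  rw [hdeg] at hmdeg
  exact nodiv_13_4 (m.coeff 3) (m.coeff 2) (m.coeff 1) (m.coeff 0)
    (by rw [← monic_shape_4 hm hmdeg]; exact hmdvd)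

private lemma const_unit (P Q : ℤ[X]) (h : NZ = P * Q) (hdeg0 : P.natDegree = 0) :
    IsUnit P := by
  obtain ⟨p0, hp⟩ := Polynomial.natDegree_eq_zero.mp hdeg0
  have h29 : p0 ∣ 29 := by
    refine ⟨Q.leadingCoeff, ?_⟩
    have := congrArg Polynomial.leadingCoeff h
    rw [NZ_lead, leadingCoeff_mul, ← hp, leadingCoeff_C] at this
    exact this
  have h91 : p0 ∣ 91 := by
    refine ⟨Q.coeff 7, ?_⟩
    have := congrArg (fun r => Polynomial.coeff r 7) h
    simpa [NZ_coeff7, ← hp, coeff_C_mul] using this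
  rw [← hp]
  exact isUnit_C.mpr (unit_of_dvd_29_91 h29 h91)

private lemma NZ_irreducible : Irreducible NZ := by
  constructor
  · intro hu
    have := natDegree_eq_zero_of_isUnit hu
    rw [NZ_natDegree] at this
    omega
  · intro A B hAB
    by_contra hcon
    push_neg at hcon
    obtain ⟨hA, hB⟩ := hcon
    have hA0 : A ≠ 0 := by rintro rfl; rw [zero_mul] at hAB; exact NZ_ne_zero hAB
    have hB0 : B ≠ 0 := by rintro rfl; rw [mul_zero] at hAB; exact NZ_ne_zero hAB
    have hdeg : A.natDegree + B.natDegree = 8 := by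
      rw [← NZ_natDegree, hAB, natDegree_mul hA0 hB0]
    have hlc : A.leadingCoeff * B.leadingCoeff = 29 := by
      rw [← leadingCoeff_mul, ← hAB, NZ_lead]
    have hlc' : B.leadingCoeff * A.leadingCoeff = 29 := by rw [mul_comm]; exact hlc
    have hBA : NZ = B * A := by rw [hAB, mul_comm]
    have hA0d : A.natDegree ≠ 0 := fun h => hA (const_unit A B hAB h)
    have hB0d : B.natDegree ≠ 0 := fun h => hB (const_unit B A hBA h)
    have e3A := excl_mod3 A B hAB hlc
    have e3B := excl_mod3 B A hBA hlc'
    have e13A := excl_mod13 A B hAB hlc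
    omega

private lemma NZ_primitive : NZ.IsPrimitive := by
  intro r hr
  have h := (Polynomial.C_dvd_iff_dvd_coeff r NZ).mp hr
  exact unit_of_dvd_29_91 (NZ_coeff8 ▸ h 8) (NZ_coeff7 ▸ h 7)

private noncomputable def NQ : ℚ[X] := NZ.map (Int.castRingHom ℚ)

private lemma NQ_irreducible : Irreducible NQ :=
  (Polynomial.IsPrimitive.Int.irreducible_iff_irreducible_map_cast NZ_primitive).mp NZ_irreducible

private lemma NQ_natDegree : NQ.natDegree = 8 := by
  rw [NQ, natDegree_map_of_leadingCoeff_ne_zero, NZ_natDegree]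
  rw [NZ_lead]
  norm_num

end Stmt19Aux

set_option maxHeartbeats 1600000 in
set_option synthInstance.maxHeartbeats 1000000 in
open Stmt19Aux IntermediateField Module in
/-- For `ζ` a primitive 7th root of unity in `ℚ(ζ₇)` and `s = ζ + ζ² + ζ⁴`, the
polynomial `-29t⁴ + (-27 + 37s)t³ + (17 + 68s)t² + (48 + 47s)t + (31 + 8s)` is
irreducible in `ℚ(ζ₇)[t]`. -/
theorem stmt_19 (ζ : CyclotomicField 7 ℚ) (hζ : IsPrimitiveRoot ζ 7)
    (s : CyclotomicField 7 ℚ) (hs : s = ζ + ζ ^ 2 + ζ ^ 4) :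
    Irreducible
      (C (-29 : CyclotomicField 7 ℚ) * X ^ 4 + C (-27 + 37 * s) * X ^ 3 +
        C (17 + 68 * s) * X ^ 2 + C (48 + 47 * s) * X + C (31 + 8 * s)) := by
  -- basic facts about s
  have h7 : ζ ^ 7 = 1 := hζ.pow_eq_one
  have hne1 : ζ ≠ 1 := hζ.ne_one (by norm_num)
  have hgeom : ζ^6 + ζ^5 + ζ^4 + ζ^3 + ζ^2 + ζ + 1 = 0 := by
    have hprod : (ζ - 1) * (ζ^6 + ζ^5 + ζ^4 + ζ^3 + ζ^2 + ζ + 1) = 0 := by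
      have : (ζ - 1) * (ζ^6 + ζ^5 + ζ^4 + ζ^3 + ζ^2 + ζ + 1) = ζ^7 - 1 := by ring
      rw [this, h7, sub_self]
    rcases mul_eq_zero.mp hprod with h | h
    · exact absurd (sub_eq_zero.mp h) hne1
    · exact h
  have hs2 : s ^ 2 = -s - 2 := by
    rw [hs]
    linear_combination ζ * h7 + 2 * hgeom
  set f : (CyclotomicField 7 ℚ)[X] := C (-29 : (CyclotomicField 7 ℚ)) * X ^ 4 + C (-27 + 37 * s) * X ^ 3 +
      C (17 + 68 * s) * X ^ 2 + C (48 + 47 * s) * X + C (31 + 8 * s) with hf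
  set g : (CyclotomicField 7 ℚ)[X] := C (-29 : (CyclotomicField 7 ℚ)) * X ^ 4 + C (-64 - 37 * s) * X ^ 3 +
      C (-51 - 68 * s) * X ^ 2 + C (1 - 47 * s) * X + C (23 - 8 * s) with hg
  have hC2 : (C s : (CyclotomicField 7 ℚ)[X]) ^ 2 = -(C s) - 2 := by
    have := congrArg (C : (CyclotomicField 7 ℚ) →+* (CyclotomicField 7 ℚ)[X]) hs2
    simpa [map_pow, map_neg, map_sub, map_ofNat] using this
  set NE : (CyclotomicField 7 ℚ)[X] := C (29 : (CyclotomicField 7 ℚ)) * X^8 + C 91 * X^7 + C 188 * X^6 + C 308 * X^5 + C 368 * X^4 +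
      C 308 * X^3 + C 188 * X^2 + C 91 * X + C 29 with hNE
  have hNEmap : NE = NQ.map (algebraMap ℚ (CyclotomicField 7 ℚ)) := by
    rw [hNE, NQ, NZ, Polynomial.map_map]
    simp [Polynomial.map_add, Polynomial.map_mul, Polynomial.map_pow,
      Polynomial.map_C, Polynomial.map_X, map_ofNat]
  have hkey : f * g = C (29 : (CyclotomicField 7 ℚ)) * NE := by
    rw [hf, hg, hNE]
    simp only [map_add, map_mul, map_sub, map_neg, map_ofNat, map_one]
    linear_combination
      (-(64:(CyclotomicField 7 ℚ)[X]) - 752*X - 3297*X^2 - 6984*X^3 - 8102*X^4 - 5032*X^5 - 1369*X^6) * hC2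
  -- degrees of f
  have hfdeg : f.degree = 4 := by rw [hf]; compute_degree! <;> norm_num
  have hf4 : f.natDegree = 4 := by rw [hf]; compute_degree! <;> norm_num
  have hf0 : f ≠ 0 := fun h => by rw [h] at hfdeg; simp at hfdeg
  -- a root in the algebraic closure
  set L := AlgebraicClosure (CyclotomicField 7 ℚ)
  haveI : CharZero L := charZero_of_injective_algebraMap (algebraMap (CyclotomicField 7 ℚ) L).injective
  haveI tqel : IsScalarTower ℚ (CyclotomicField 7 ℚ) L := IsScalarTower.of_algebraMap_eq' (Subsingleton.elim _ _)
  have hmapdeg : (f.map (algebraMap (CyclotomicField 7 ℚ) L)).degree ≠ 0 := by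
    rw [Polynomial.degree_map, hfdeg]
    norm_num
  obtain ⟨α, hα⟩ := IsAlgClosed.exists_root (f.map (algebraMap (CyclotomicField 7 ℚ) L)) hmapdeg
  have haf : (Polynomial.aeval α) f = 0 := by
    rwa [Polynomial.IsRoot, Polynomial.eval_map, ← Polynomial.aeval_def] at hα
  have halg : IsIntegral (CyclotomicField 7 ℚ) α := (IsAlgebraic.isIntegral ⟨f, hf0, haf⟩)
  -- N vanishes at α
  have hNEα : (Polynomial.aeval α) NE = 0 := by
    have h1 := congrArg (Polynomial.aeval α) hkey
    rw [map_mul, haf, zero_mul, map_mul, aeval_C] at h1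
    have h29 : (algebraMap (CyclotomicField 7 ℚ) L) 29 ≠ 0 := by
      rw [map_ofNat]
      exact (by norm_num : (29 : L) ≠ 0)
    exact (mul_eq_zero.mp h1.symm).resolve_left h29
  have hNQα : (Polynomial.aeval α) NQ = 0 := by
    have h2 := Polynomial.aeval_map_algebraMap (CyclotomicField 7 ℚ) α NQ
    rw [← hNEmap] at h2
    rw [← h2]
    exact hNEα
  -- the monic rational minimal polynomial
  set M : ℚ[X] := C (29⁻¹ : ℚ) * NQ with hM
  have hNQlead : NQ.leadingCoeff = 29 := by
    rw [NQ, Polynomial.leadingCoeff_map_of_leadingCoeff_ne_zero, NZ_lead]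
    · norm_num
    · rw [NZ_lead]; norm_num
  have hMmonic : M.Monic := by
    rw [hM]
    exact monic_C_mul_of_mul_leadingCoeff_eq_one (by rw [hNQlead]; norm_num)
  have hM8 : M.natDegree = 8 := by
    rw [hM, natDegree_C_mul (by norm_num : (29⁻¹:ℚ) ≠ 0), NQ_natDegree]
  have hMirr : Irreducible M := by
    have hu : IsUnit (C (29⁻¹ : ℚ)) := isUnit_C.mpr (by norm_num)
    have hassoc : Associated NQ M := by
      refine ⟨hu.unit, ?_⟩
      rw [IsUnit.unit_spec, hM, mul_comm]
    exact hassoc.irreducible NQ_irreducible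
  have hMα : (Polynomial.aeval α) M = 0 := by
    rw [hM, map_mul, aeval_C, hNQα, mul_zero]
  have hmin : minpoly ℚ α = M := (minpoly.eq_of_irreducible_of_monic hMirr hMα hMmonic).symm
  -- tower argument
  haveI : FiniteDimensional (CyclotomicField 7 ℚ) (CyclotomicField 7 ℚ)⟮α⟯ := IntermediateField.adjoin.finiteDimensional halg
  haveI : CharZero (CyclotomicField 7 ℚ)⟮α⟯ := charZero_of_injective_algebraMap (algebraMap (CyclotomicField 7 ℚ) (CyclotomicField 7 ℚ)⟮α⟯).injective
  haveI tqe : IsScalarTower ℚ (CyclotomicField 7 ℚ) (CyclotomicField 7 ℚ)⟮α⟯ := IsScalarTower.of_algebraMap_eq' (Subsingleton.elim _ _)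
  haveI tqk : IsScalarTower ℚ (CyclotomicField 7 ℚ)⟮α⟯ L := IsScalarTower.of_algebraMap_eq' (Subsingleton.elim _ _)
  haveI : IsCyclotomicExtension {7} ℚ (CyclotomicField 7 ℚ) := CyclotomicField.isCyclotomicExtension 7 ℚ
  haveI : FiniteDimensional ℚ (CyclotomicField 7 ℚ) := IsCyclotomicExtension.finiteDimensional {7} ℚ (CyclotomicField 7 ℚ)
  haveI : FiniteDimensional ℚ (CyclotomicField 7 ℚ)⟮α⟯ := FiniteDimensional.trans ℚ (CyclotomicField 7 ℚ) (CyclotomicField 7 ℚ)⟮α⟯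
  set α' : (CyclotomicField 7 ℚ)⟮α⟯ := IntermediateField.AdjoinSimple.gen (CyclotomicField 7 ℚ) α
  have hα'min : minpoly ℚ α' = M := by
    have h3 := minpoly.algebraMap_eq (A := ℚ) (algebraMap (CyclotomicField 7 ℚ)⟮α⟯ L).injective α'
    rw [IntermediateField.AdjoinSimple.algebraMap_gen] at h3
    rw [← h3, hmin]
  have hα'int : IsIntegral ℚ α' := IsIntegral.of_finite ℚ α'
  have h8 : finrank ℚ ℚ⟮α'⟯ = 8 := by
    rw [IntermediateField.adjoin.finrank hα'int, hα'min, hM8]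
  have hE6 : finrank ℚ (CyclotomicField 7 ℚ) = 6 := by
    rw [IsCyclotomicExtension.finrank (n := 7) (CyclotomicField 7 ℚ) (Polynomial.cyclotomic.irreducible_rat
      (by norm_num))]
    decide
  have hd : finrank (CyclotomicField 7 ℚ) (CyclotomicField 7 ℚ)⟮α⟯ = (minpoly (CyclotomicField 7 ℚ) α).natDegree := IntermediateField.adjoin.finrank halg
  have htow1 : finrank ℚ (CyclotomicField 7 ℚ) * finrank (CyclotomicField 7 ℚ) (CyclotomicField 7 ℚ)⟮α⟯ = finrank ℚ (CyclotomicField 7 ℚ)⟮α⟯ :=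
    finrank_mul_finrank ℚ (CyclotomicField 7 ℚ) (CyclotomicField 7 ℚ)⟮α⟯
  have htow2 : finrank ℚ ℚ⟮α'⟯ * finrank ℚ⟮α'⟯ (CyclotomicField 7 ℚ)⟮α⟯ = finrank ℚ (CyclotomicField 7 ℚ)⟮α⟯ :=
    finrank_mul_finrank ℚ ℚ⟮α'⟯ (CyclotomicField 7 ℚ)⟮α⟯
  have hdvd_f : minpoly (CyclotomicField 7 ℚ) α ∣ f := minpoly.dvd (CyclotomicField 7 ℚ) α haf
  have hd4 : (minpoly (CyclotomicField 7 ℚ) α).natDegree ≤ 4 := hf4 ▸ Polynomial.natDegree_le_of_dvd hdvd_f hf0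
  have hd1 : 0 < (minpoly (CyclotomicField 7 ℚ) α).natDegree := minpoly.natDegree_pos halg
  have hdeq : (minpoly (CyclotomicField 7 ℚ) α).natDegree = 4 := by
    rw [hd] at htow1
    rw [h8] at htow2
    rw [hE6] at htow1
    omega
  -- conclude
  obtain ⟨u, hu⟩ := hdvd_f
  have hu0 : u ≠ 0 := by
    rintro rfl
    rw [mul_zero] at hu
    exact hf0 hu
  have hundeg : u.natDegree = 0 := by
    have hmul := Polynomial.natDegree_mul (minpoly.ne_zero halg) hu0
    rw [← hu, hf4, hdeq] at hmul
    omega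
  obtain ⟨c, hc⟩ := Polynomial.natDegree_eq_zero.mp hundeg
  have hcu : IsUnit u := by
    rw [← hc]
    refine isUnit_C.mpr (isUnit_iff_ne_zero.mpr ?_)
    rintro rfl
    rw [map_zero] at hc
    exact hu0 hc.symm
  have hassoc : Associated (minpoly (CyclotomicField 7 ℚ) α) f := ⟨hcu.unit, by rw [IsUnit.unit_spec, ← hu]⟩
  exact hassoc.irreducible (minpoly.irreducible halg)
end
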